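/- Progress: if C ⊢ M : T | e and (C , C') ⊢ ℋ for some run-time context C', then either M is a value, or there exist M' and ℋ' with M | ℋ → M' | ℋ'. -/

import Mathlib

set_option autoImplicit false
set_option linter.unusedVariables false

namespace LawOrder

/-! ## Graph representations -/

structure Graph (B : Type) where
  n : ℕ
  label : ℕ → B
  edge : ℕ → ℕ → Prop
  edge_lt : ∀ i j, edge i j → i < n ∧ j < n

namespace Graph

variable {B : Type}

/-- The edge relation is acyclic. -/
def Acyclic (G : Graph B) : Prop := ∀ i, ¬ Relation.TransGen G.edge i i

/-- The empty graph representation. -/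
def zero (B : Type) [Inhabited B] : Graph B :=
  ⟨0, fun _ => default, fun _ _ => False, fun _ _ h => h.elim⟩

/-- Union of two graph representations: disjoint union, second part shifted. -/
def union (G₁ G₂ : Graph B) : Graph B where
  n := G₁.n + G₂.n
  label := fun i => if i < G₁.n then G₁.label i else G₂.label (i - G₁.n)
  edge := fun i j =>
    G₁.edge i j ∨ (G₁.n ≤ i ∧ G₁.n ≤ j ∧ G₂.edge (i - G₁.n) (j - G₁.n))
  edge_lt := by
    intro i j h
    rcases h with h | ⟨hi, hj, h⟩
    · have := G₁.edge_lt i j h; omega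
    · have := G₂.edge_lt _ _ h; omega

/-- Join of two graph representations: union plus all edges from the first
    part to the second part. -/
def join (G₁ G₂ : Graph B) : Graph B where
  n := G₁.n + G₂.n
  label := fun i => if i < G₁.n then G₁.label i else G₂.label (i - G₁.n)
  edge := fun i j =>
    G₁.edge i j ∨ (G₁.n ≤ i ∧ G₁.n ≤ j ∧ G₂.edge (i - G₁.n) (j - G₁.n)) ∨
      (i < G₁.n ∧ G₁.n ≤ j ∧ j < G₁.n + G₂.n)
  edge_lt := by
    intro i j h
    rcases h with h | ⟨hi, hj, h⟩ | ⟨hi, hj₁, hj₂⟩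
    · have := G₁.edge_lt i j h; omega
    · have := G₂.edge_lt _ _ h; omega
    · omega

/-- Isomorphism of graph representations. -/
def Iso (G₁ G₂ : Graph B) : Prop :=
  G₁.n = G₂.n ∧ ∃ f : Fin G₁.n → Fin G₁.n, Function.Bijective f ∧
    (∀ i j : Fin G₁.n, G₁.edge (f i).val (f j).val ↔ G₂.edge i.val j.val) ∧
    (∀ i : Fin G₁.n, G₁.label (f i).val = G₂.label i.val)

/-- `G₁` is a spanning graph representation of `G₂`: same vertices and labels,
    and the edges of `G₁` are contained in those of `G₂`. -/
def Spanning (G₁ G₂ : Graph B) : Prop :=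
  G₁.n = G₂.n ∧ (∀ i, i < G₁.n → G₁.label i = G₂.label i) ∧
    ∀ i j, G₁.edge i j → G₂.edge i j

/-- `f` is a topological ordering of `G`: `f` enumerates the vertices so that
    edges always point forward. -/
def IsTopOrder (G : Graph B) (f : Equiv.Perm (Fin G.n)) : Prop :=
  ∀ i j : Fin G.n, G.edge i.val j.val → f.symm i < f.symm j

/-- `G` has exactly one topological ordering. -/
def Traceable (G : Graph B) : Prop :=
  ∃! f : Equiv.Perm (Fin G.n), G.IsTopOrder f

/-- The identity enumeration is a topological ordering: all edges increase. -/
def TopOrdered (G : Graph B) : Prop := ∀ i j, G.edge i j → i < j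

/-- `k` is a union cut of `G`: no edge crosses from below `k` to `k` or above. -/
def UnionCut (G : Graph B) (k : ℕ) : Prop :=
  0 < k ∧ k < G.n ∧ ∀ i j, i < k → k ≤ j → ¬ G.edge i j

/-- `k` is a join cut of `G`: every pair crossing from below `k` to `k` or
    above (within range) is an edge. -/
def JoinCut (G : Graph B) (k : ℕ) : Prop :=
  0 < k ∧ k < G.n ∧ ∀ i j, i < k → k ≤ j → j < G.n → G.edge i j

/-- Lower part of the index cut at `k`. -/
def cutLo (G : Graph B) (k : ℕ) : Graph B where
  n := k
  label := G.label
  edge := fun i j => G.edge i j ∧ i < k ∧ j < k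
  edge_lt := fun i j h => ⟨h.2.1, h.2.2⟩

/-- Upper part of the index cut at `k` (re-indexed from 0). -/
def cutHi (G : Graph B) (k : ℕ) : Graph B where
  n := G.n - k
  label := fun i => G.label (i + k)
  edge := fun i j => G.edge (i + k) (j + k)
  edge_lt := by
    intro i j h
    have := G.edge_lt _ _ h
    omega

/-- Weak connectedness: any two vertices are joined by an undirected path. -/
def WeaklyConnected (G : Graph B) : Prop :=
  ∀ i j, i < G.n → j < G.n →
    Relation.ReflTransGen (fun a b => G.edge a b ∨ G.edge b a) i j

/-- Union of a nonempty sequence of graph representations. -/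
def unionList (G : Graph B) (L : List (Graph B)) : Graph B :=
  L.foldl union G

end Graph

/-! ## Contexts built from bindings with ordered and unordered composition -/

inductive GCtx (B : Type) where
  | empty : GCtx B
  | bind : B → GCtx B
  | comma : GCtx B → GCtx B → GCtx B
  | par : GCtx B → GCtx B → GCtx B

/-- Context patterns: contexts with a single hole. -/
inductive GPat (B : Type) where
  | hole : GPat B
  | commaL : GPat B → GCtx B → GPat B
  | commaR : GCtx B → GPat B → GPat B
  | parL : GPat B → GCtx B → GPat B
  | parR : GCtx B → GPat B → GPat B

def GPat.fill {B : Type} : GPat B → GCtx B → GCtx B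
  | .hole, Γ => Γ
  | .commaL G Δ, Γ => .comma (G.fill Γ) Δ
  | .commaR Δ G, Γ => .comma Δ (G.fill Γ)
  | .parL G Δ, Γ => .par (G.fill Γ) Δ
  | .parR Δ G, Γ => .par Δ (G.fill Γ)

def GCtx.toList {B : Type} : GCtx B → List B
  | .empty => []
  | .bind b => [b]
  | .comma Γ₁ Γ₂ => Γ₁.toList ++ Γ₂.toList
  | .par Γ₁ Γ₂ => Γ₁.toList ++ Γ₂.toList

/-- Graph part of the interpretation of a context: unrestricted bindings
    contribute no vertex, ordered bindings one vertex; `comma` is join,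
    `par` is union. -/
def GCtx.interpG {B : Type} [Inhabited B] (unr : B → Bool) : GCtx B → Graph B
  | .empty => Graph.zero B
  | .bind b =>
      if unr b then Graph.zero B
      else ⟨1, fun _ => b, fun _ _ => False, fun _ _ h => h.elim⟩
  | .comma Γ₁ Γ₂ => (interpG unr Γ₁).join (interpG unr Γ₂)
  | .par Γ₁ Γ₂ => (interpG unr Γ₁).union (interpG unr Γ₂)

/-- Set part of the interpretation of a context: the set of its
    unrestricted bindings. -/
def GCtx.unrSet {B : Type} (unr : B → Bool) : GCtx B → Set B
  | .empty => ∅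
  | .bind b => if unr b then {b} else ∅
  | .comma Γ₁ Γ₂ => unrSet unr Γ₁ ∪ unrSet unr Γ₂
  | .par Γ₁ Γ₂ => unrSet unr Γ₁ ∪ unrSet unr Γ₂

/-! ## Ordered partial monoids -/

structure OPM (α : Type) where
  mul : α → α → Option α
  eps : α
  le : α → α → Prop
  le_refl : ∀ a, le a a
  le_trans : ∀ a b c, le a b → le b c → le a c
  eps_mul : ∀ a, mul eps a = some a
  mul_eps : ∀ a, mul a eps = some a
  mul_assoc : ∀ a b c,
    (mul a b).bind (fun x => mul x c) = (mul b c).bind (fun x => mul a x)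
  mul_mono : ∀ a a' b b' c', le a a' → le b b' → mul a' b' = some c' →
    ∃ c, mul a b = some c ∧ le c c'

/-- `P.mulLe a b c` means `a ⊙ b` is defined and `a ⊙ b ≤ c`. -/
def OPM.mulLe {α : Type} (P : OPM α) (a b c : α) : Prop :=
  ∃ r, P.mul a b = some r ∧ P.le r c

/-! ## Types and effects (effects are booleans: `false` = 0, `true` = 1) -/

inductive Ty (α : Type) where
  | unit : Ty α
  | res : α → Ty α
  | arrow : Ty α → Bool → Ty α → Ty α
  | uarrow : Ty α → Bool → Ty α → Ty α
  | rarrow : Ty α → Bool → Ty α → Ty α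
  | larrow : Ty α → Bool → Ty α → Ty α
  | uprod : Ty α → Ty α → Ty α
  | oprod : Ty α → Ty α → Ty α

def Ty.unrB {α : Type} : Ty α → Bool
  | .unit => true
  | .res _ => false
  | .arrow _ _ _ => true
  | .uarrow _ _ _ => false
  | .rarrow _ _ _ => false
  | .larrow _ _ _ => false
  | .uprod S T => S.unrB && T.unrB
  | .oprod S T => S.unrB && T.unrB

/-- Unrestricted types. -/
def Ty.Unr {α : Type} (T : Ty α) : Prop := T.unrB = true

/-- Ordered types. -/
def Ty.Ord {α : Type} (T : Ty α) : Prop := T.unrB = false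

/-! ## Bindings and typing contexts -/

inductive Binding (α : Type) where
  | var : ℕ → Ty α → Binding α
  | loc : ℕ → α → Binding α

instance {α : Type} : Inhabited (Binding α) := ⟨Binding.var 0 Ty.unit⟩

def Binding.unrB {α : Type} : Binding α → Bool
  | .var _ T => T.unrB
  | .loc _ _ => false

abbrev Ctx (α : Type) := GCtx (Binding α)
abbrev CtxPat (α : Type) := GPat (Binding α)

/-- Graph part of the interpretation of a typing context. -/
def interpC {α : Type} (Γ : Ctx α) : Graph (Binding α) :=
  GCtx.interpG Binding.unrB Γ

/-- Set part of the interpretation of a typing context. -/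
def unrSetC {α : Type} (Γ : Ctx α) : Set (Binding α) :=
  GCtx.unrSet Binding.unrB Γ

/-- Subcontext relation `Γ₁ ≲ Γ₂`: up to isomorphism on both sides, the graph
    of `Γ₁` is a spanning subgraph of the graph of `Γ₂`, and the unrestricted
    set of `Γ₂` is contained in that of `Γ₁`. -/
def SubC {α : Type} (Γ₁ Γ₂ : Ctx α) : Prop :=
  (∃ G₁ G₂ : Graph (Binding α),
      Graph.Iso (interpC Γ₁) G₁ ∧ Graph.Spanning G₁ G₂ ∧ Graph.Iso G₂ (interpC Γ₂)) ∧
    unrSetC Γ₂ ⊆ unrSetC Γ₁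

def vdom {α : Type} (Γ : Ctx α) : Set ℕ :=
  {x | ∃ T, Binding.var x T ∈ GCtx.toList Γ}

def ldom {α : Type} (Γ : Ctx α) : Set ℕ :=
  {l | ∃ m, Binding.loc l m ∈ GCtx.toList Γ}

/-- All bindings of the context are unrestricted. -/
def isUnrCtx {α : Type} (Γ : Ctx α) : Prop :=
  ∀ b ∈ GCtx.toList Γ, Binding.unrB b = true

/-- Run-time contexts contain only location bindings. -/
def isRuntime {α : Type} (Γ : Ctx α) : Prop :=
  ∀ b ∈ GCtx.toList Γ, ∃ l m, b = Binding.loc l m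

/-! ## Expressions -/

inductive Const (α : Type) where
  | unit : Const α
  | new : α → Const α
  | op : α → Const α
  | split : α → α → Const α
  | drop : Const α

inductive Expr (α : Type) where
  | const : Const α → Expr α
  | loc : ℕ → Expr α
  | var : ℕ → Expr α
  | abs : ℕ → Expr α → Expr α
  | uabs : ℕ → Expr α → Expr α
  | rabs : ℕ → Expr α → Expr α
  | labs : ℕ → Expr α → Expr α
  | app : Expr α → Expr α → Expr α
  | uapp : Expr α → Expr α → Expr α
  | rapp : Expr α → Expr α → Expr α
  | lapp : Expr α → Expr α → Expr α
  | upair : Expr α → Expr α → Expr α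
  | opair : Expr α → Expr α → Expr α
  | ulet : ℕ → ℕ → Expr α → Expr α → Expr α
  | olet : ℕ → ℕ → Expr α → Expr α → Expr α

inductive IsValue {α : Type} : Expr α → Prop where
  | const : ∀ c : Const α, IsValue (Expr.const c)
  | loc : ∀ l : ℕ, IsValue (Expr.loc l)
  | abs : ∀ (x : ℕ) (M : Expr α), IsValue (Expr.abs x M)
  | uabs : ∀ (x : ℕ) (M : Expr α), IsValue (Expr.uabs x M)
  | rabs : ∀ (x : ℕ) (M : Expr α), IsValue (Expr.rabs x M)
  | labs : ∀ (x : ℕ) (M : Expr α), IsValue (Expr.labs x M)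
  | upair : ∀ V₁ V₂ : Expr α, IsValue V₁ → IsValue V₂ → IsValue (Expr.upair V₁ V₂)
  | opair : ∀ V₁ V₂ : Expr α, IsValue V₁ → IsValue V₂ → IsValue (Expr.opair V₁ V₂)

/-- Substitution `M[V/x]` (values substituted at run time are closed, so
    no capture can occur). -/
def subst {α : Type} : Expr α → Expr α → ℕ → Expr α
  | Expr.const c, _, _ => Expr.const c
  | Expr.loc l, _, _ => Expr.loc l
  | Expr.var y, V, x => if y = x then V else Expr.var y
  | Expr.abs y N, V, x => Expr.abs y (if y = x then N else subst N V x)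
  | Expr.uabs y N, V, x => Expr.uabs y (if y = x then N else subst N V x)
  | Expr.rabs y N, V, x => Expr.rabs y (if y = x then N else subst N V x)
  | Expr.labs y N, V, x => Expr.labs y (if y = x then N else subst N V x)
  | Expr.app M N, V, x => Expr.app (subst M V x) (subst N V x)
  | Expr.uapp M N, V, x => Expr.uapp (subst M V x) (subst N V x)
  | Expr.rapp M N, V, x => Expr.rapp (subst M V x) (subst N V x)
  | Expr.lapp M N, V, x => Expr.lapp (subst M V x) (subst N V x)
  | Expr.upair M N, V, x => Expr.upair (subst M V x) (subst N V x)
  | Expr.opair M N, V, x => Expr.opair (subst M V x) (subst N V x)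
  | Expr.ulet y z M N, V, x =>
      Expr.ulet y z (subst M V x) (if y = x ∨ z = x then N else subst N V x)
  | Expr.olet y z M N, V, x =>
      Expr.olet y z (subst M V x) (if y = x ∨ z = x then N else subst N V x)

/-! ## Typing (Fig. 7) -/

inductive Typing {α : Type} (P : OPM α) : Ctx α → Expr α → Ty α → Bool → Prop where
  | unit : Typing P GCtx.empty (Expr.const Const.unit) Ty.unit false
  | new : ∀ m : α,
      Typing P GCtx.empty (Expr.const (Const.new m))
        (Ty.arrow Ty.unit false (Ty.res m)) false
  | op : ∀ m₀ m₁ m₂ : α, P.mulLe m₁ m₂ m₀ →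
      Typing P GCtx.empty (Expr.const (Const.op m₁))
        (Ty.arrow (Ty.res m₀) true (Ty.res m₂)) false
  | split : ∀ m₀ m₁ m₂ : α, P.mulLe m₁ m₂ m₀ →
      Typing P GCtx.empty (Expr.const (Const.split m₁ m₂))
        (Ty.arrow (Ty.res m₀) false (Ty.oprod (Ty.res m₁) (Ty.res m₂))) false
  | drop : ∀ m : α, P.le P.eps m →
      Typing P GCtx.empty (Expr.const Const.drop)
        (Ty.arrow (Ty.res m) false Ty.unit) false
  | var : ∀ (x : ℕ) (T : Ty α),
      Typing P (GCtx.bind (Binding.var x T)) (Expr.var x) T false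
  | loc : ∀ (l : ℕ) (m : α),
      Typing P (GCtx.bind (Binding.loc l m)) (Expr.loc l) (Ty.res m) false
  | abs : ∀ (Γ : Ctx α) (x : ℕ) (S T : Ty α) (M : Expr α) (e : Bool),
      x ∉ vdom Γ → isUnrCtx Γ →
      Typing P (GCtx.comma Γ (GCtx.bind (Binding.var x S))) M T e →
      Typing P Γ (Expr.abs x M) (Ty.arrow S e T) false
  | uabs : ∀ (Γ : Ctx α) (x : ℕ) (S T : Ty α) (M : Expr α) (e : Bool),
      x ∉ vdom Γ →
      Typing P (GCtx.par Γ (GCtx.bind (Binding.var x S))) M T e →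
      Typing P Γ (Expr.uabs x M) (Ty.uarrow S e T) false
  | rabs : ∀ (Γ : Ctx α) (x : ℕ) (S T : Ty α) (M : Expr α) (e : Bool),
      x ∉ vdom Γ →
      Typing P (GCtx.comma Γ (GCtx.bind (Binding.var x S))) M T e →
      Typing P Γ (Expr.rabs x M) (Ty.rarrow S e T) false
  | labs : ∀ (Γ : Ctx α) (x : ℕ) (S T : Ty α) (M : Expr α) (e : Bool),
      x ∉ vdom Γ →
      Typing P (GCtx.comma (GCtx.bind (Binding.var x S)) Γ) M T e →
      Typing P Γ (Expr.labs x M) (Ty.larrow S e T) false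
  | app : ∀ (Γ₁ Γ₂ : Ctx α) (M N : Expr α) (S T : Ty α) (e e₁ e₂ : Bool),
      Typing P Γ₁ M (Ty.arrow S e T) e₁ → Typing P Γ₂ N S e₂ →
      Typing P (GCtx.comma Γ₁ Γ₂) (Expr.app M N) T (e || e₁ || e₂)
  | uapp : ∀ (Γ₁ Γ₂ : Ctx α) (M N : Expr α) (S T : Ty α) (e e₁ e₂ : Bool),
      Typing P Γ₁ M (Ty.uarrow S e T) e₁ → Typing P Γ₂ N S e₂ →
      Typing P (GCtx.par Γ₁ Γ₂) (Expr.uapp M N) T (e || e₁ || e₂)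
  | rapp : ∀ (Γ₁ Γ₂ : Ctx α) (M N : Expr α) (S T : Ty α) (e e₁ : Bool),
      Typing P Γ₁ M (Ty.rarrow S e T) e₁ → Typing P Γ₂ N S false →
      Typing P (GCtx.comma Γ₁ Γ₂) (Expr.rapp M N) T (e || e₁)
  | lapp : ∀ (Γ₁ Γ₂ : Ctx α) (M N : Expr α) (S T : Ty α) (e e₂ : Bool),
      Typing P Γ₂ M (Ty.larrow S e T) false → Typing P Γ₁ N S e₂ →
      Typing P (GCtx.comma Γ₁ Γ₂) (Expr.lapp M N) T (e || e₂)
  | upair : ∀ (Γ₁ Γ₂ : Ctx α) (M N : Expr α) (S T : Ty α) (e₁ e₂ : Bool),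
      Typing P Γ₁ M S e₁ → Typing P Γ₂ N T e₂ →
      Typing P (GCtx.par Γ₁ Γ₂) (Expr.upair M N) (Ty.uprod S T) (e₁ || e₂)
  | opair : ∀ (Γ₁ Γ₂ : Ctx α) (M N : Expr α) (S T : Ty α) (e₁ e₂ : Bool),
      (Ty.Ord S → e₂ = false) →
      Typing P Γ₁ M S e₁ → Typing P Γ₂ N T e₂ →
      Typing P (GCtx.comma Γ₁ Γ₂) (Expr.opair M N) (Ty.oprod S T) (e₁ || e₂)
  | ulet : ∀ (G : CtxPat α) (Γ : Ctx α) (x y : ℕ) (M N : Expr α)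
        (S₁ S₂ T : Ty α) (e : Bool),
      x ≠ y → x ∉ vdom (GPat.fill G Γ) → y ∉ vdom (GPat.fill G Γ) →
      Typing P Γ M (Ty.uprod S₁ S₂) false →
      Typing P (GPat.fill G (GCtx.par (GCtx.bind (Binding.var x S₁))
        (GCtx.bind (Binding.var y S₂)))) N T e →
      Typing P (GPat.fill G Γ) (Expr.ulet x y M N) T e
  | olet : ∀ (G : CtxPat α) (Γ : Ctx α) (x y : ℕ) (M N : Expr α)
        (S₁ S₂ T : Ty α) (e : Bool),
      x ≠ y → x ∉ vdom (GPat.fill G Γ) → y ∉ vdom (GPat.fill G Γ) →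
      Typing P Γ M (Ty.oprod S₁ S₂) false →
      Typing P (GPat.fill G (GCtx.comma (GCtx.bind (Binding.var x S₁))
        (GCtx.bind (Binding.var y S₂)))) N T e →
      Typing P (GPat.fill G Γ) (Expr.olet x y M N) T e
  | weaken : ∀ (Γ₁ Γ₂ : Ctx α) (M : Expr α) (T : Ty α) (e₁ e₂ : Bool),
      Typing P Γ₁ M T e₁ → SubC Γ₂ Γ₁ → e₁ ≤ e₂ →
      Typing P Γ₂ M T e₂

/-! ## Heaps -/

structure Heap (α : Type) where
  find : ℕ → Option (ℕ × α × α)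
  fin : Set.Finite {l | find l ≠ none}

def Heap.dom {α : Type} (H : Heap α) : Set ℕ := {l | H.find l ≠ none}

def Heap.update {α : Type} (H : Heap α) (l : ℕ) (t : ℕ × α × α) : Heap α where
  find := fun l' => if l' = l then some t else H.find l'
  fin := by
    have hsub : {l' | (if l' = l then some t else H.find l') ≠ none} ⊆
        insert l {l' | H.find l' ≠ none} := by
      intro x hx
      by_cases h : x = l
      · exact Set.mem_insert_iff.mpr (Or.inl h)
      · refine Set.mem_insert_iff.mpr (Or.inr ?_)
        simp only [Set.mem_setOf_eq, if_neg h] at hx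
        exact hx
    exact Set.Finite.subset (Set.Finite.insert l H.fin) hsub

def Heap.erase {α : Type} (H : Heap α) (l : ℕ) : Heap α where
  find := fun l' => if l' = l then none else H.find l'
  fin := by
    apply Set.Finite.subset H.fin
    intro x hx
    simp only [Set.mem_setOf_eq] at hx ⊢
    by_cases h : x = l
    · rw [if_pos h] at hx; exact absurd rfl hx
    · rw [if_neg h] at hx; exact hx

def Heap.empty (α : Type) : Heap α :=
  ⟨fun _ => none, Set.Finite.subset Set.finite_empty (fun _ hx => (hx rfl).elim)⟩

/-! ## Reduction -/

/-- Expression reduction `M →β M'`. -/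
inductive BetaStep {α : Type} : Expr α → Expr α → Prop where
  | beta : ∀ (x : ℕ) (M V : Expr α), IsValue V →
      BetaStep (Expr.app (Expr.abs x M) V) (subst M V x)
  | ubeta : ∀ (x : ℕ) (M V : Expr α), IsValue V →
      BetaStep (Expr.uapp (Expr.uabs x M) V) (subst M V x)
  | rbeta : ∀ (x : ℕ) (M V : Expr α), IsValue V →
      BetaStep (Expr.rapp (Expr.rabs x M) V) (subst M V x)
  | lbeta : ∀ (x : ℕ) (M V : Expr α), IsValue V →
      BetaStep (Expr.lapp (Expr.labs x M) V) (subst M V x)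
  | uletv : ∀ (x y : ℕ) (M V₁ V₂ : Expr α), x ≠ y → IsValue V₁ → IsValue V₂ →
      BetaStep (Expr.ulet x y (Expr.upair V₁ V₂) M) (subst (subst M V₁ x) V₂ y)
  | oletv : ∀ (x y : ℕ) (M V₁ V₂ : Expr α), x ≠ y → IsValue V₁ → IsValue V₂ →
      BetaStep (Expr.olet x y (Expr.opair V₁ V₂) M) (subst (subst M V₁ x) V₂ y)

/-- Configuration reduction `M | ℋ →γ M' | ℋ'`. -/
inductive CfgStep {α : Type} (P : OPM α) : Expr α → Heap α → Expr α → Heap α → Prop where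
  | new : ∀ (H : Heap α) (l : ℕ) (m : α), l ∉ Heap.dom H →
      CfgStep P (Expr.app (Expr.const (Const.new m)) (Expr.const Const.unit)) H
        (Expr.loc l) (H.update l (0, m, P.eps))
  | op : ∀ (H : Heap α) (l n : ℕ) (m₀ m m' m'' : α),
      H.find l = some (n, m₀, m') → P.mul m' m = some m'' →
      (∃ m₃ : α, P.mulLe m'' m₃ m₀) →
      CfgStep P (Expr.app (Expr.const (Const.op m)) (Expr.loc l)) H
        (Expr.loc l) (H.update l (n, m₀, m''))
  | cl1 : ∀ (H : Heap α) (l n : ℕ) (m₀ m : α),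
      H.find l = some (n + 1, m₀, m) →
      CfgStep P (Expr.app (Expr.const Const.drop) (Expr.loc l)) H
        (Expr.const Const.unit) (H.update l (n, m₀, m))
  | cl2 : ∀ (H : Heap α) (l : ℕ) (m₀ m : α),
      H.find l = some (0, m₀, m) → P.le m m₀ →
      CfgStep P (Expr.app (Expr.const Const.drop) (Expr.loc l)) H
        (Expr.const Const.unit) (H.erase l)
  | sp : ∀ (H : Heap α) (l n : ℕ) (m₀ m m₁ m₂ : α),
      H.find l = some (n, m₀, m) →
      CfgStep P (Expr.app (Expr.const (Const.split m₁ m₂)) (Expr.loc l)) H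
        (Expr.opair (Expr.loc l) (Expr.loc l)) (H.update l (n + 1, m₀, m))

/-- Call-by-value evaluation contexts (left-to-right, except that
    `<`-applications evaluate right-to-left). -/
inductive ECtx (α : Type) : Type where
  | hole : ECtx α
  | appL : ECtx α → Expr α → ECtx α
  | appR : (V : Expr α) → IsValue V → ECtx α → ECtx α
  | uappL : ECtx α → Expr α → ECtx α
  | uappR : (V : Expr α) → IsValue V → ECtx α → ECtx α
  | rappL : ECtx α → Expr α → ECtx α
  | rappR : (V : Expr α) → IsValue V → ECtx α → ECtx α
  | lappL : ECtx α → (V : Expr α) → IsValue V → ECtx α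
  | lappR : Expr α → ECtx α → ECtx α
  | upairL : ECtx α → Expr α → ECtx α
  | upairR : (V : Expr α) → IsValue V → ECtx α → ECtx α
  | opairL : ECtx α → Expr α → ECtx α
  | opairR : (V : Expr α) → IsValue V → ECtx α → ECtx α
  | uletE : ℕ → ℕ → ECtx α → Expr α → ECtx α
  | oletE : ℕ → ℕ → ECtx α → Expr α → ECtx α

def ECtx.plug {α : Type} : ECtx α → Expr α → Expr α
  | .hole, M => M
  | .appL E N, M => Expr.app (E.plug M) N
  | .appR V _ E, M => Expr.app V (E.plug M)
  | .uappL E N, M => Expr.uapp (E.plug M) N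
  | .uappR V _ E, M => Expr.uapp V (E.plug M)
  | .rappL E N, M => Expr.rapp (E.plug M) N
  | .rappR V _ E, M => Expr.rapp V (E.plug M)
  | .lappL E V _, M => Expr.lapp (E.plug M) V
  | .lappR N E, M => Expr.lapp N (E.plug M)
  | .upairL E N, M => Expr.upair (E.plug M) N
  | .upairR V _ E, M => Expr.upair V (E.plug M)
  | .opairL E N, M => Expr.opair (E.plug M) N
  | .opairR V _ E, M => Expr.opair V (E.plug M)
  | .uletE x y E N, M => Expr.ulet x y (E.plug M) N
  | .oletE x y E N, M => Expr.olet x y (E.plug M) N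

/-- Contextual reduction `M | ℋ → M' | ℋ'`. -/
inductive Step {α : Type} (P : OPM α) : Expr α → Heap α → Expr α → Heap α → Prop where
  | exp : ∀ (E : ECtx α) (M M' : Expr α) (H : Heap α),
      BetaStep M M' → Step P (E.plug M) H (E.plug M') H
  | cfg : ∀ (E : ECtx α) (M M' : Expr α) (H H' : Heap α),
      CfgStep P M H M' H' → Step P (E.plug M) H (E.plug M') H'

/-! ## Run-time contexts, focus, heap typing -/

/-- Focus on location `l`: replace every binding of a location other than `l`
    by the empty context. -/
def focus {α : Type} : Ctx α → ℕ → Ctx α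
  | GCtx.empty, _ => GCtx.empty
  | GCtx.bind (Binding.loc l' m), l =>
      if l' = l then GCtx.bind (Binding.loc l' m) else GCtx.empty
  | GCtx.bind (Binding.var x T), _ => GCtx.bind (Binding.var x T)
  | GCtx.comma Γ₁ Γ₂, l => GCtx.comma (focus Γ₁ l) (focus Γ₂ l)
  | GCtx.par Γ₁ Γ₂, l => GCtx.par (focus Γ₁ l) (focus Γ₂ l)

/-- A run-time context is order-defined if every focus graph has a unique
    topological ordering. -/
def orderDefined {α : Type} (Γ : Ctx α) : Prop :=
  ∀ l : ℕ, Graph.Traceable (interpC (focus Γ l))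

def bUsage {α : Type} (P : OPM α) : Binding α → α
  | Binding.loc _ m => m
  | Binding.var _ _ => P.eps

def listProd {α : Type} (P : OPM α) : List α → Option α
  | [] => some P.eps
  | m :: ms => (listProd P ms).bind fun r => P.mul m r

/-- `focusUsage P Γ l u` : the usage projection of `⟨Γ⟩_l` is defined and
    equal to `u` (the ⊙-product of the usages along a topological ordering of
    the focus graph). -/
def focusUsage {α : Type} (P : OPM α) (Γ : Ctx α) (l : ℕ) (u : α) : Prop :=
  ∃ f : Equiv.Perm (Fin (interpC (focus Γ l)).n),
    Graph.IsTopOrder (interpC (focus Γ l)) f ∧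
      listProd P (List.ofFn fun k =>
        bUsage P ((interpC (focus Γ l)).label (f k).val)) = some u

/-- Heap typing `C ⊢ ℋ`. -/
def HeapTy {α : Type} (P : OPM α) (C : Ctx α) (H : Heap α) : Prop :=
  orderDefined C ∧
  ldom C = Heap.dom H ∧
  ∀ (l n : ℕ) (m₀ m : α), H.find l = some (n, m₀, m) →
    (interpC (focus C l)).n = n + 1 ∧
    ∃ u r : α, focusUsage P C l u ∧ P.mul m u = some r ∧ P.le r m₀

/-! ## Auxiliary lemmas for the progress proof -/

section Aux

variable {α : Type}

/-- All edges of an interpretation graph go strictly forward. -/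
theorem topOrdered_interp (Γ : Ctx α) : (interpC Γ).TopOrdered := by
  induction Γ with
  | empty => intro i j h; exact h.elim
  | bind b =>
      intro i j h
      simp only [interpC, GCtx.interpG] at h
      split at h <;> exact h.elim
  | comma Γ₁ Γ₂ ih₁ ih₂ =>
      intro i j h
      rcases h with h | ⟨hi, hj, h⟩ | ⟨hi, hj, _⟩
      · exact ih₁ _ _ h
      · have := ih₂ _ _ h; omega
      · omega
  | par Γ₁ Γ₂ ih₁ ih₂ =>
      intro i j h
      rcases h with h | ⟨hi, hj, h⟩
      · exact ih₁ _ _ h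
      · have := ih₂ _ _ h; omega

/-- Ordered bindings are vertices. -/
theorem mem_toList_vertex {Γ : Ctx α} {b : Binding α}
    (hb : b ∈ GCtx.toList Γ) (ho : b.unrB = false) :
    ∃ i, i < (interpC Γ).n ∧ (interpC Γ).label i = b := by
  induction Γ with
  | empty => simp [GCtx.toList] at hb
  | bind b' =>
      simp only [GCtx.toList, List.mem_singleton] at hb
      subst hb
      refine ⟨0, ?_⟩
      simp [interpC, GCtx.interpG, ho]
  | comma Γ₁ Γ₂ ih₁ ih₂ =>
      simp only [GCtx.toList, List.mem_append] at hb
      rcases hb with hb | hb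
      · obtain ⟨i, hi, hl⟩ := ih₁ hb
        refine ⟨i, show i < (interpC Γ₁).n + (interpC Γ₂).n by omega, ?_⟩
        show (if i < (interpC Γ₁).n then (interpC Γ₁).label i else _) = b
        rw [if_pos hi]; exact hl
      · obtain ⟨i, hi, hl⟩ := ih₂ hb
        refine ⟨(interpC Γ₁).n + i,
          show (interpC Γ₁).n + i < (interpC Γ₁).n + (interpC Γ₂).n by omega, ?_⟩
        show (if (interpC Γ₁).n + i < (interpC Γ₁).n then _ else
            (interpC Γ₂).label ((interpC Γ₁).n + i - (interpC Γ₁).n)) = b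
        rw [if_neg (by omega)]
        simpa using hl
  | par Γ₁ Γ₂ ih₁ ih₂ =>
      simp only [GCtx.toList, List.mem_append] at hb
      rcases hb with hb | hb
      · obtain ⟨i, hi, hl⟩ := ih₁ hb
        refine ⟨i, show i < (interpC Γ₁).n + (interpC Γ₂).n by omega, ?_⟩
        show (if i < (interpC Γ₁).n then (interpC Γ₁).label i else _) = b
        rw [if_pos hi]; exact hl
      · obtain ⟨i, hi, hl⟩ := ih₂ hb
        refine ⟨(interpC Γ₁).n + i,
          show (interpC Γ₁).n + i < (interpC Γ₁).n + (interpC Γ₂).n by omega, ?_⟩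
        show (if (interpC Γ₁).n + i < (interpC Γ₁).n then _ else
            (interpC Γ₂).label ((interpC Γ₁).n + i - (interpC Γ₁).n)) = b
        rw [if_neg (by omega)]
        simpa using hl

/-- Unrestricted bindings are in the unrestricted set. -/
theorem mem_toList_unr {Γ : Ctx α} {b : Binding α}
    (hb : b ∈ GCtx.toList Γ) (ho : b.unrB = true) :
    b ∈ unrSetC Γ := by
  induction Γ with
  | empty => simp [GCtx.toList] at hb
  | bind b' =>
      simp only [GCtx.toList, List.mem_singleton] at hb
      subst hb
      simp [unrSetC, GCtx.unrSet, ho]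
  | comma Γ₁ Γ₂ ih₁ ih₂ =>
      simp only [GCtx.toList, List.mem_append] at hb
      rcases hb with hb | hb
      · exact Or.inl (ih₁ hb)
      · exact Or.inr (ih₂ hb)
  | par Γ₁ Γ₂ ih₁ ih₂ =>
      simp only [GCtx.toList, List.mem_append] at hb
      rcases hb with hb | hb
      · exact Or.inl (ih₁ hb)
      · exact Or.inr (ih₂ hb)

theorem mem_unrSet_toList {Γ : Ctx α} {b : Binding α}
    (hb : b ∈ unrSetC Γ) : b ∈ GCtx.toList Γ := by
  induction Γ with
  | empty => simp [unrSetC, GCtx.unrSet] at hb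
  | bind b' =>
      simp only [unrSetC, GCtx.unrSet] at hb
      split at hb
      · simp only [Set.mem_singleton_iff] at hb; subst hb; simp [GCtx.toList]
      · simp at hb
  | comma Γ₁ Γ₂ ih₁ ih₂ =>
      rcases hb with hb | hb
      · exact List.mem_append.2 (Or.inl (ih₁ hb))
      · exact List.mem_append.2 (Or.inr (ih₂ hb))
  | par Γ₁ Γ₂ ih₁ ih₂ =>
      rcases hb with hb | hb
      · exact List.mem_append.2 (Or.inl (ih₁ hb))
      · exact List.mem_append.2 (Or.inr (ih₂ hb))

/-- Vertices are bindings. -/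
theorem vertex_mem_toList {Γ : Ctx α} {i : ℕ}
    (hi : i < (interpC Γ).n) : (interpC Γ).label i ∈ GCtx.toList Γ := by
  induction Γ generalizing i with
  | empty => simp [interpC, GCtx.interpG, Graph.zero] at hi
  | bind b =>
      simp only [interpC, GCtx.interpG] at hi ⊢
      split at hi
      · simp [Graph.zero] at hi
      · rename_i h
        rw [if_neg h]
        simp [GCtx.toList]
  | comma Γ₁ Γ₂ ih₁ ih₂ =>
      have hi' : i < (interpC Γ₁).n + (interpC Γ₂).n := hi
      show (if i < (interpC Γ₁).n then (interpC Γ₁).label i else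
        (interpC Γ₂).label (i - (interpC Γ₁).n)) ∈ _
      by_cases h : i < (interpC Γ₁).n
      · rw [if_pos h]; exact List.mem_append.2 (Or.inl (ih₁ h))
      · rw [if_neg h]
        exact List.mem_append.2 (Or.inr (ih₂ (by omega)))
  | par Γ₁ Γ₂ ih₁ ih₂ =>
      have hi' : i < (interpC Γ₁).n + (interpC Γ₂).n := hi
      show (if i < (interpC Γ₁).n then (interpC Γ₁).label i else
        (interpC Γ₂).label (i - (interpC Γ₁).n)) ∈ _
      by_cases h : i < (interpC Γ₁).n
      · rw [if_pos h]; exact List.mem_append.2 (Or.inl (ih₁ h))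
      · rw [if_neg h]
        exact List.mem_append.2 (Or.inr (ih₂ (by omega)))

/-- In a run-time context, the number of vertices is the number of bindings. -/
theorem length_toList_runtime {Γ : Ctx α} (h : isRuntime Γ) :
    (GCtx.toList Γ).length = (interpC Γ).n := by
  induction Γ with
  | empty => simp [GCtx.toList, interpC, GCtx.interpG, Graph.zero]
  | bind b =>
      obtain ⟨l, m, rfl⟩ := h b (by simp [GCtx.toList])
      simp [GCtx.toList, interpC, GCtx.interpG, Binding.unrB]
  | comma Γ₁ Γ₂ ih₁ ih₂ =>
      have h₁ : isRuntime Γ₁ := fun b hb => h b (List.mem_append.2 (Or.inl hb))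
      have h₂ : isRuntime Γ₂ := fun b hb => h b (List.mem_append.2 (Or.inr hb))
      show (GCtx.toList Γ₁ ++ GCtx.toList Γ₂).length = (interpC Γ₁).n + (interpC Γ₂).n
      rw [List.length_append, ih₁ h₁, ih₂ h₂]
  | par Γ₁ Γ₂ ih₁ ih₂ =>
      have h₁ : isRuntime Γ₁ := fun b hb => h b (List.mem_append.2 (Or.inl hb))
      have h₂ : isRuntime Γ₂ := fun b hb => h b (List.mem_append.2 (Or.inr hb))
      show (GCtx.toList Γ₁ ++ GCtx.toList Γ₂).length = (interpC Γ₁).n + (interpC Γ₂).n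
      rw [List.length_append, ih₁ h₁, ih₂ h₂]

def locFilter (l : ℕ) : Binding α → Bool
  | .loc l' _ => decide (l' = l)
  | .var _ _ => true

theorem toList_focus (Γ : Ctx α) (l : ℕ) :
    GCtx.toList (focus Γ l) = (GCtx.toList Γ).filter (locFilter l) := by
  induction Γ with
  | empty => simp [focus, GCtx.toList]
  | bind b =>
      match b with
      | .var x T => simp [focus, GCtx.toList, locFilter]; rfl
      | .loc l' m =>
          by_cases h : l' = l
          · simp [focus, h, GCtx.toList, locFilter]
          · simp [focus, h, GCtx.toList, locFilter]
  | comma Γ₁ Γ₂ ih₁ ih₂ =>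
      show GCtx.toList (focus Γ₁ l) ++ GCtx.toList (focus Γ₂ l) = _
      rw [ih₁, ih₂]
      show _ = (GCtx.toList Γ₁ ++ GCtx.toList Γ₂).filter _
      rw [List.filter_append]
  | par Γ₁ Γ₂ ih₁ ih₂ =>
      show GCtx.toList (focus Γ₁ l) ++ GCtx.toList (focus Γ₂ l) = _
      rw [ih₁, ih₂]
      show _ = (GCtx.toList Γ₁ ++ GCtx.toList Γ₂).filter _
      rw [List.filter_append]

theorem mem_focus_of_mem {Γ : Ctx α} {l : ℕ} {a : α}
    (h : Binding.loc l a ∈ GCtx.toList Γ) :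
    Binding.loc l a ∈ GCtx.toList (focus Γ l) := by
  rw [toList_focus]
  exact List.mem_filter.2 ⟨h, by simp [locFilter]⟩

theorem mem_of_mem_focus {Γ : Ctx α} {l : ℕ} {b : Binding α}
    (h : b ∈ GCtx.toList (focus Γ l)) : b ∈ GCtx.toList Γ := by
  rw [toList_focus] at h
  exact (List.mem_filter.1 h).1

theorem isRuntime_focus {Γ : Ctx α} (h : isRuntime Γ) (l : ℕ) :
    isRuntime (focus Γ l) :=
  fun b hb => h b (mem_of_mem_focus hb)

/-! ### SubC machinery -/

theorem subc_hom {Γ₂ Γ₁ : Ctx α} (h : SubC Γ₂ Γ₁) :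
    (interpC Γ₂).n = (interpC Γ₁).n ∧
    ∃ h : ℕ → ℕ,
      (∀ i, i < (interpC Γ₁).n → h i < (interpC Γ₂).n) ∧
      (∀ k, k < (interpC Γ₂).n → ∃ i, i < (interpC Γ₁).n ∧ h i = k) ∧
      (∀ i, i < (interpC Γ₁).n → (interpC Γ₂).label (h i) = (interpC Γ₁).label i) ∧
      (∀ i j, i < (interpC Γ₁).n → j < (interpC Γ₁).n →
        (interpC Γ₂).edge (h i) (h j) → (interpC Γ₁).edge i j) := by
  obtain ⟨⟨G₁, G₂, ⟨hn1, f, hfb, hfe, hfl⟩, ⟨hn2, hsl, hse⟩, ⟨hn3, g, hgb, hge, hgl⟩⟩, _⟩ := h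
  have hn : (interpC Γ₂).n = (interpC Γ₁).n := by omega
  refine ⟨hn, fun i => if hi : i < (interpC Γ₁).n then
      (f ⟨(g ⟨i, by omega⟩).val, by have := (g ⟨i, by omega⟩).isLt; omega⟩).val
    else 0, ?_, ?_, ?_, ?_⟩
  · intro i hi
    dsimp only
    rw [dif_pos hi]
    exact (f _).isLt
  · intro k hk
    obtain ⟨p, hp⟩ := hfb.2 ⟨k, hk⟩
    obtain ⟨q, hq⟩ := hgb.2 ⟨p.val, by have := p.isLt; omega⟩
    refine ⟨q.val, by have := q.isLt; omega, ?_⟩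
    dsimp only
    rw [dif_pos (show q.val < (interpC Γ₁).n by have := q.isLt; omega)]
    have : (⟨q.val, by have := q.isLt; omega⟩ : Fin G₂.n) = q := rfl
    simp only [this, hq, Fin.val_mk]
    have : (⟨(p : ℕ), by have := p.isLt; omega⟩ : Fin (interpC Γ₂).n) = p := rfl
    rw [this, hp]
  · intro i hi
    dsimp only
    rw [dif_pos hi]
    rw [hfl]
    have h1 := hsl (g ⟨i, by omega⟩).val (by have := (g ⟨i, by omega⟩).isLt; omega)
    have h2 := hgl ⟨i, by omega⟩
    show G₁.label _ = _
    rw [h1]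
    exact h2
  · intro i j hi hj he
    dsimp only at he
    rw [dif_pos hi, dif_pos hj] at he
    rw [hfe] at he
    have := hse _ _ he
    have h2 := hge ⟨i, by omega⟩ ⟨j, by omega⟩
    exact h2.1 this

theorem subc_mem {Γ₂ Γ₁ : Ctx α} (h : SubC Γ₂ Γ₁) {b : Binding α}
    (hb : b ∈ GCtx.toList Γ₁) : b ∈ GCtx.toList Γ₂ := by
  obtain ⟨hn, hh, hlt, hsurj, hlab, hedge⟩ := subc_hom h
  by_cases ho : b.unrB = true
  · exact mem_unrSet_toList (h.2 (mem_toList_unr hb ho))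
  · obtain ⟨i, hi, hl⟩ := mem_toList_vertex hb (by simpa using ho)
    have := hlab i hi
    rw [hl] at this
    have h2 := vertex_mem_toList (Γ := Γ₂) (hlt i hi)
    rwa [this] at h2

theorem runtime_back {Γ₂ Γ₁ : Ctx α} (h : SubC Γ₂ Γ₁) (hrt : isRuntime Γ₂) :
    isRuntime Γ₁ :=
  fun b hb => hrt b (subc_mem h hb)

/-! ### Focused graphs as induced subgraphs -/

/-- `φ` exhibits `Gf` as the induced subgraph of `G` on the `p`-labelled
vertices (as far as needed). -/
def Induced {B : Type} (p : B → Prop) (Gf G : Graph B) (φ : ℕ → ℕ) : Prop :=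
  (∀ i, i < Gf.n → φ i < G.n ∧ G.label (φ i) = Gf.label i) ∧
  (∀ i j, i < Gf.n → j < Gf.n → (Gf.edge i j ↔ G.edge (φ i) (φ j))) ∧
  (∀ k, k < G.n → p (G.label k) → ∃ i, i < Gf.n ∧ φ i = k)

theorem induced_join {B : Type} (p : B → Prop) {Gf₁ G₁ Gf₂ G₂ : Graph B}
    {φ₁ φ₂ : ℕ → ℕ} (h₁ : Induced p Gf₁ G₁ φ₁) (h₂ : Induced p Gf₂ G₂ φ₂) :
    Induced p (Gf₁.join Gf₂) (G₁.join G₂)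
      (fun i => if i < Gf₁.n then φ₁ i else G₁.n + φ₂ (i - Gf₁.n)) := by
  obtain ⟨hl₁, he₁, hs₁⟩ := h₁
  obtain ⟨hl₂, he₂, hs₂⟩ := h₂
  have hn : (Gf₁.join Gf₂).n = Gf₁.n + Gf₂.n := rfl
  have hN : (G₁.join G₂).n = G₁.n + G₂.n := rfl
  refine ⟨?_, ?_, ?_⟩
  · intro i hi
    dsimp only
    rw [hn] at hi
    by_cases h : i < Gf₁.n
    · rw [if_pos h]
      obtain ⟨hb, hl⟩ := hl₁ i h
      refine ⟨by rw [hN]; omega, ?_⟩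
      show (if φ₁ i < G₁.n then G₁.label (φ₁ i) else _) =
        (if i < Gf₁.n then Gf₁.label i else _)
      rw [if_pos hb, if_pos h]; exact hl
    · rw [if_neg h]
      obtain ⟨hb, hl⟩ := hl₂ (i - Gf₁.n) (by omega)
      refine ⟨by rw [hN]; omega, ?_⟩
      show (if G₁.n + φ₂ (i - Gf₁.n) < G₁.n then _
          else G₂.label (G₁.n + φ₂ (i - Gf₁.n) - G₁.n)) =
        (if i < Gf₁.n then _ else Gf₂.label (i - Gf₁.n))
      rw [if_neg (by omega), if_neg h, Nat.add_sub_cancel_left]; exact hl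
  · intro i j hi hj
    dsimp only
    rw [hn] at hi hj
    show (Gf₁.edge i j ∨ _ ∨ _) ↔ (G₁.edge _ _ ∨ _ ∨ _)
    by_cases h : i < Gf₁.n <;> by_cases h' : j < Gf₁.n
    · rw [if_pos h, if_pos h']
      have hb := (hl₁ i h).1
      have hb' := (hl₁ j h').1
      constructor
      · rintro (he | ⟨hx, _, _⟩ | ⟨_, hx, _⟩)
        · exact Or.inl ((he₁ i j h h').1 he)
        · omega
        · omega
      · rintro (he | ⟨hx, _, _⟩ | ⟨_, hx, _⟩)
        · exact Or.inl ((he₁ i j h h').2 he)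
        · omega
        · omega
    · rw [if_pos h, if_neg h']
      have hb := (hl₁ i h).1
      have hb' := (hl₂ (j - Gf₁.n) (by omega)).1
      constructor
      · rintro (he | ⟨hx, _, _⟩ | _)
        · exact absurd (Gf₁.edge_lt _ _ he).2 (by omega)
        · omega
        · exact Or.inr (Or.inr ⟨by omega, by omega, by omega⟩)
      · intro _
        exact Or.inr (Or.inr ⟨h, by omega, by omega⟩)
    · rw [if_neg h, if_pos h']
      have hb := (hl₂ (i - Gf₁.n) (by omega)).1
      have hb' := (hl₁ j h').1
      constructor
      · rintro (he | ⟨hx, _, _⟩ | ⟨hx, _, _⟩)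
        · exact absurd (Gf₁.edge_lt _ _ he).1 (by omega)
        · omega
        · omega
      · rintro (he | ⟨hx, _, _⟩ | ⟨hx, _, _⟩)
        · exact absurd (G₁.edge_lt _ _ he).1 (by omega)
        · omega
        · omega
    · rw [if_neg h, if_neg h']
      have hb := (hl₂ (i - Gf₁.n) (by omega)).1
      have hb' := (hl₂ (j - Gf₁.n) (by omega)).1
      constructor
      · rintro (he | ⟨_, _, he⟩ | ⟨hx, _, _⟩)
        · exact absurd (Gf₁.edge_lt _ _ he).1 (by omega)
        · refine Or.inr (Or.inl ⟨by omega, by omega, ?_⟩)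
          rw [Nat.add_sub_cancel_left, Nat.add_sub_cancel_left]
          exact (he₂ _ _ (by omega) (by omega)).1 he
        · omega
      · rintro (he | ⟨_, _, he⟩ | ⟨hx, _, _⟩)
        · exact absurd (G₁.edge_lt _ _ he).1 (by omega)
        · rw [Nat.add_sub_cancel_left, Nat.add_sub_cancel_left] at he
          exact Or.inr (Or.inl ⟨by omega, by omega,
            (he₂ _ _ (by omega) (by omega)).2 he⟩)
        · omega
  · intro k hk hp
    rw [hN] at hk
    by_cases h : k < G₁.n
    · have : (G₁.join G₂).label k = G₁.label k := if_pos h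
      rw [this] at hp
      obtain ⟨i, hi, hφ⟩ := hs₁ k h hp
      exact ⟨i, by rw [hn]; omega, by dsimp only; rw [if_pos hi]; exact hφ⟩
    · have : (G₁.join G₂).label k = G₂.label (k - G₁.n) := if_neg h
      rw [this] at hp
      obtain ⟨i, hi, hφ⟩ := hs₂ (k - G₁.n) (by omega) hp
      refine ⟨Gf₁.n + i, by rw [hn]; omega, ?_⟩
      dsimp only
      rw [if_neg (by omega), Nat.add_sub_cancel_left, hφ]
      omega

theorem induced_union {B : Type} (p : B → Prop) {Gf₁ G₁ Gf₂ G₂ : Graph B}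
    {φ₁ φ₂ : ℕ → ℕ} (h₁ : Induced p Gf₁ G₁ φ₁) (h₂ : Induced p Gf₂ G₂ φ₂) :
    Induced p (Gf₁.union Gf₂) (G₁.union G₂)
      (fun i => if i < Gf₁.n then φ₁ i else G₁.n + φ₂ (i - Gf₁.n)) := by
  obtain ⟨hl₁, he₁, hs₁⟩ := h₁
  obtain ⟨hl₂, he₂, hs₂⟩ := h₂
  have hn : (Gf₁.union Gf₂).n = Gf₁.n + Gf₂.n := rfl
  have hN : (G₁.union G₂).n = G₁.n + G₂.n := rfl
  refine ⟨?_, ?_, ?_⟩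
  · intro i hi
    dsimp only
    rw [hn] at hi
    by_cases h : i < Gf₁.n
    · rw [if_pos h]
      obtain ⟨hb, hl⟩ := hl₁ i h
      refine ⟨by rw [hN]; omega, ?_⟩
      show (if φ₁ i < G₁.n then G₁.label (φ₁ i) else _) =
        (if i < Gf₁.n then Gf₁.label i else _)
      rw [if_pos hb, if_pos h]; exact hl
    · rw [if_neg h]
      obtain ⟨hb, hl⟩ := hl₂ (i - Gf₁.n) (by omega)
      refine ⟨by rw [hN]; omega, ?_⟩
      show (if G₁.n + φ₂ (i - Gf₁.n) < G₁.n then _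
          else G₂.label (G₁.n + φ₂ (i - Gf₁.n) - G₁.n)) =
        (if i < Gf₁.n then _ else Gf₂.label (i - Gf₁.n))
      rw [if_neg (by omega), if_neg h, Nat.add_sub_cancel_left]; exact hl
  · intro i j hi hj
    dsimp only
    rw [hn] at hi hj
    show (Gf₁.edge i j ∨ _) ↔ (G₁.edge _ _ ∨ _)
    by_cases h : i < Gf₁.n <;> by_cases h' : j < Gf₁.n
    · rw [if_pos h, if_pos h']
      have hb := (hl₁ i h).1
      have hb' := (hl₁ j h').1
      constructor
      · rintro (he | ⟨hx, _, _⟩)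
        · exact Or.inl ((he₁ i j h h').1 he)
        · omega
      · rintro (he | ⟨hx, _, _⟩)
        · exact Or.inl ((he₁ i j h h').2 he)
        · omega
    · rw [if_pos h, if_neg h']
      have hb := (hl₁ i h).1
      constructor
      · rintro (he | ⟨hx, _, _⟩)
        · exact absurd (Gf₁.edge_lt _ _ he).2 (by omega)
        · omega
      · rintro (he | ⟨hx, _, _⟩)
        · exact absurd (G₁.edge_lt _ _ he).2 (by omega)
        · omega
    · rw [if_neg h, if_pos h']
      have hb' := (hl₁ j h').1
      constructor
      · rintro (he | ⟨_, hx, _⟩)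
        · exact absurd (Gf₁.edge_lt _ _ he).1 (by omega)
        · omega
      · rintro (he | ⟨_, hx, _⟩)
        · exact absurd (G₁.edge_lt _ _ he).1 (by omega)
        · omega
    · rw [if_neg h, if_neg h']
      have hb := (hl₂ (i - Gf₁.n) (by omega)).1
      have hb' := (hl₂ (j - Gf₁.n) (by omega)).1
      constructor
      · rintro (he | ⟨_, _, he⟩)
        · exact absurd (Gf₁.edge_lt _ _ he).1 (by omega)
        · refine Or.inr ⟨by omega, by omega, ?_⟩
          rw [Nat.add_sub_cancel_left, Nat.add_sub_cancel_left]
          exact (he₂ _ _ (by omega) (by omega)).1 he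
      · rintro (he | ⟨_, _, he⟩)
        · exact absurd (G₁.edge_lt _ _ he).1 (by omega)
        · rw [Nat.add_sub_cancel_left, Nat.add_sub_cancel_left] at he
          exact Or.inr ⟨by omega, by omega,
            (he₂ _ _ (by omega) (by omega)).2 he⟩
  · intro k hk hp
    rw [hN] at hk
    by_cases h : k < G₁.n
    · have : (G₁.union G₂).label k = G₁.label k := if_pos h
      rw [this] at hp
      obtain ⟨i, hi, hφ⟩ := hs₁ k h hp
      exact ⟨i, by rw [hn]; omega, by dsimp only; rw [if_pos hi]; exact hφ⟩
    · have : (G₁.union G₂).label k = G₂.label (k - G₁.n) := if_neg h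
      rw [this] at hp
      obtain ⟨i, hi, hφ⟩ := hs₂ (k - G₁.n) (by omega) hp
      refine ⟨Gf₁.n + i, by rw [hn]; omega, ?_⟩
      dsimp only
      rw [if_neg (by omega), Nat.add_sub_cancel_left, hφ]
      omega

/-- `b` is a binding for location `l`. -/
def isl (l : ℕ) (b : Binding α) : Prop := ∃ a, b = Binding.loc l a

theorem focus_induced (Γ : Ctx α) (l : ℕ) :
    ∃ φ : ℕ → ℕ, Induced (isl l) (interpC (focus Γ l)) (interpC Γ) φ := by
  induction Γ with
  | empty =>
      exact ⟨id, fun i hi => by simp [interpC, GCtx.interpG, Graph.zero, focus] at hi,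
        fun i j hi hj => Iff.rfl,
        fun k hk _ => by simp [interpC, GCtx.interpG, Graph.zero] at hk⟩
  | bind b =>
      match b with
      | .var x T =>
          exact ⟨id, fun i hi => ⟨hi, rfl⟩, fun i j _ _ => Iff.rfl,
            fun k hk _ => ⟨k, hk, rfl⟩⟩
      | .loc l' m =>
          by_cases h : l' = l
          · have hf : focus (GCtx.bind (Binding.loc l' m)) l =
              GCtx.bind (Binding.loc l' m) := if_pos h
            rw [hf]
            exact ⟨id, fun i hi => ⟨hi, rfl⟩, fun i j _ _ => Iff.rfl,
              fun k hk _ => ⟨k, hk, rfl⟩⟩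
          · have hf : focus (GCtx.bind (Binding.loc l' m)) l = GCtx.empty :=
              if_neg h
            rw [hf]
            refine ⟨id, ?_, ?_, ?_⟩
            · intro i hi; simp [interpC, GCtx.interpG, Graph.zero] at hi
            · intro i j hi _; simp [interpC, GCtx.interpG, Graph.zero] at hi
            · intro k hk hp
              have hk1 : k < 1 := by
                simpa [interpC, GCtx.interpG, Binding.unrB] using hk
              have : (interpC (GCtx.bind (Binding.loc l' m))).label k =
                  Binding.loc l' m := by
                simp [interpC, GCtx.interpG, Binding.unrB]
              rw [this] at hp
              obtain ⟨a, ha⟩ := hp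
              cases ha
              exact absurd rfl h
  | comma Γ₁ Γ₂ ih₁ ih₂ =>
      obtain ⟨φ₁, h₁⟩ := ih₁
      obtain ⟨φ₂, h₂⟩ := ih₂
      exact ⟨_, induced_join (isl l) h₁ h₂⟩
  | par Γ₁ Γ₂ ih₁ ih₂ =>
      obtain ⟨φ₁, h₁⟩ := ih₁
      obtain ⟨φ₂, h₂⟩ := ih₂
      exact ⟨_, induced_union (isl l) h₁ h₂⟩

/-! ### Minimal location bindings -/

/-- `a` is the usage of a source vertex of the focus graph of `Γ` at `l`. -/
def MinLoc (Γ : Ctx α) (l : ℕ) (a : α) : Prop :=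
  ∃ i, i < (interpC (focus Γ l)).n ∧
    (interpC (focus Γ l)).label i = Binding.loc l a ∧
    ∀ j, ¬ (interpC (focus Γ l)).edge j i

theorem focus_label_isl {Γ : Ctx α} (hrt : isRuntime Γ) {l i : ℕ}
    (hi : i < (interpC (focus Γ l)).n) :
    isl l ((interpC (focus Γ l)).label i) := by
  have hb := vertex_mem_toList hi
  have hb' := hb
  rw [toList_focus] at hb'
  obtain ⟨hmem, hflt⟩ := List.mem_filter.1 hb'
  obtain ⟨l', m, heq⟩ := hrt _ hmem
  rw [heq] at hflt
  simp only [locFilter, decide_eq_true_eq] at hflt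
  exact ⟨m, by rw [heq, hflt]⟩

theorem interpC_comma (Γ₁ Γ₂ : Ctx α) :
    interpC (GCtx.comma Γ₁ Γ₂) = (interpC Γ₁).join (interpC Γ₂) := rfl

theorem interpC_par (Γ₁ Γ₂ : Ctx α) :
    interpC (GCtx.par Γ₁ Γ₂) = (interpC Γ₁).union (interpC Γ₂) := rfl

theorem focus_comma (Γ₁ Γ₂ : Ctx α) (l : ℕ) :
    focus (GCtx.comma Γ₁ Γ₂) l = GCtx.comma (focus Γ₁ l) (focus Γ₂ l) := rfl

theorem focus_par (Γ₁ Γ₂ : Ctx α) (l : ℕ) :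
    focus (GCtx.par Γ₁ Γ₂) l = GCtx.par (focus Γ₁ l) (focus Γ₂ l) := rfl

theorem minloc_comma_left {Γ₁ Γ₂ : Ctx α} {l : ℕ} {a : α}
    (h : MinLoc Γ₁ l a) : MinLoc (GCtx.comma Γ₁ Γ₂) l a := by
  unfold MinLoc
  rw [focus_comma, interpC_comma]
  obtain ⟨i, hi, hl, hm⟩ := h
  refine ⟨i, ?_, ?_, ?_⟩
  · show i < (interpC (focus Γ₁ l)).n + (interpC (focus Γ₂ l)).n
    omega
  · show (if i < (interpC (focus Γ₁ l)).n then _ else _) = _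
    rw [if_pos hi]; exact hl
  · rintro j (he | ⟨hx, hy, _⟩ | ⟨_, hx, _⟩)
    · exact hm j he
    · omega
    · omega

theorem minloc_comma_right {Γ₁ Γ₂ : Ctx α} {l : ℕ} {a : α}
    (h0 : (interpC (focus Γ₁ l)).n = 0) (h : MinLoc Γ₂ l a) :
    MinLoc (GCtx.comma Γ₁ Γ₂) l a := by
  unfold MinLoc
  rw [focus_comma, interpC_comma]
  obtain ⟨i, hi, hl, hm⟩ := h
  refine ⟨i, ?_, ?_, ?_⟩
  · show i < (interpC (focus Γ₁ l)).n + (interpC (focus Γ₂ l)).n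
    omega
  · show (if i < (interpC (focus Γ₁ l)).n then _
      else (interpC (focus Γ₂ l)).label (i - (interpC (focus Γ₁ l)).n)) = _
    rw [if_neg (by omega)]
    rw [h0, Nat.sub_zero]
    exact hl
  · rintro j (he | ⟨hx, hy, he⟩ | ⟨hx, _, _⟩)
    · exact absurd ((interpC (focus Γ₁ l)).edge_lt _ _ he).1 (by omega)
    · rw [h0, Nat.sub_zero, Nat.sub_zero] at he
      exact hm j he
    · omega

theorem minloc_par_left {Γ₁ Γ₂ : Ctx α} {l : ℕ} {a : α}
    (h : MinLoc Γ₁ l a) : MinLoc (GCtx.par Γ₁ Γ₂) l a := by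
  unfold MinLoc
  rw [focus_par, interpC_par]
  obtain ⟨i, hi, hl, hm⟩ := h
  refine ⟨i, ?_, ?_, ?_⟩
  · show i < (interpC (focus Γ₁ l)).n + (interpC (focus Γ₂ l)).n
    omega
  · show (if i < (interpC (focus Γ₁ l)).n then _ else _) = _
    rw [if_pos hi]; exact hl
  · rintro j (he | ⟨hx, hy, _⟩)
    · exact hm j he
    · omega

theorem minloc_par_right {Γ₁ Γ₂ : Ctx α} {l : ℕ} {a : α}
    (h : MinLoc Γ₂ l a) : MinLoc (GCtx.par Γ₁ Γ₂) l a := by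
  unfold MinLoc
  rw [focus_par, interpC_par]
  obtain ⟨i, hi, hl, hm⟩ := h
  refine ⟨(interpC (focus Γ₁ l)).n + i, ?_, ?_, ?_⟩
  · show (interpC (focus Γ₁ l)).n + i <
      (interpC (focus Γ₁ l)).n + (interpC (focus Γ₂ l)).n
    omega
  · show (if (interpC (focus Γ₁ l)).n + i < (interpC (focus Γ₁ l)).n then _
      else (interpC (focus Γ₂ l)).label
        ((interpC (focus Γ₁ l)).n + i - (interpC (focus Γ₁ l)).n)) = _
    rw [if_neg (by omega), Nat.add_sub_cancel_left]
    exact hl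
  · rintro j (he | ⟨hx, hy, he⟩)
    · exact absurd ((interpC (focus Γ₁ l)).edge_lt _ _ he).2 (by omega)
    · rw [Nat.add_sub_cancel_left] at he
      exact hm _ he

/-- A single-binding run-time context has its binding minimal. -/
theorem minloc_single {Γ : Ctx α} {l : ℕ} {a : α} (hrt : isRuntime Γ)
    (h : GCtx.toList Γ = [Binding.loc l a]) : MinLoc Γ l a := by
  have hfoc : GCtx.toList (focus Γ l) = [Binding.loc l a] := by
    rw [toList_focus, h]
    simp [locFilter]
  have hn : (interpC (focus Γ l)).n = 1 := by
    rw [← length_toList_runtime (isRuntime_focus hrt l), hfoc]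
    rfl
  have hl : (interpC (focus Γ l)).label 0 = Binding.loc l a := by
    have := vertex_mem_toList (Γ := focus Γ l) (i := 0) (by omega)
    rw [hfoc] at this
    simpa using this
  refine ⟨0, by omega, hl, ?_⟩
  intro j he
  exact absurd (topOrdered_interp (focus Γ l) j 0 he) (by omega)

theorem nfocus_zero_of_nil {Γ : Ctx α} (h : GCtx.toList Γ = []) (l : ℕ) :
    (interpC (focus Γ l)).n = 0 := by
  have hfoc : GCtx.toList (focus Γ l) = [] := by
    rw [toList_focus, h]; rfl
  have hrt : isRuntime (focus Γ l) := by
    intro b hb; rw [hfoc] at hb; simp at hb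
  rw [← length_toList_runtime hrt, hfoc]
  rfl

/-- Minimal bindings transfer backwards along subcontexts. -/
theorem minloc_subc {Γ₂ Γ₁ : Ctx α} (hsub : SubC Γ₂ Γ₁)
    (hrt₂ : isRuntime Γ₂) {l : ℕ} {a : α}
    (h : MinLoc Γ₁ l a) : MinLoc Γ₂ l a := by
  obtain ⟨i₁, hi₁, hlab₁, hmin₁⟩ := h
  obtain ⟨φ₁, hl₁, he₁, hs₁⟩ := focus_induced Γ₁ l
  obtain ⟨hk₁lt, hk₁lab⟩ := hl₁ i₁ hi₁
  -- no l-vertex of Γ₁'s full graph points at φ₁ i₁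
  have claimA : ∀ j, j < (interpC Γ₁).n → isl l ((interpC Γ₁).label j) →
      ¬ (interpC Γ₁).edge j (φ₁ i₁) := by
    intro j hj hjl he
    obtain ⟨j', hj', rfl⟩ := hs₁ j hj hjl
    exact hmin₁ j' ((he₁ j' i₁ hj' hi₁).2 he)
  obtain ⟨hn, h, hlt, hsurj, hlab, hedge⟩ := subc_hom hsub
  have hk₂lt : h (φ₁ i₁) < (interpC Γ₂).n := hlt _ hk₁lt
  have hk₂lab : (interpC Γ₂).label (h (φ₁ i₁)) = Binding.loc l a := by
    rw [hlab _ hk₁lt, hk₁lab, hlab₁]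
  have claimB : ∀ j, j < (interpC Γ₂).n → isl l ((interpC Γ₂).label j) →
      ¬ (interpC Γ₂).edge j (h (φ₁ i₁)) := by
    intro j hj hjl he
    obtain ⟨j', hj', rfl⟩ := hsurj j hj
    rw [hlab _ hj'] at hjl
    exact claimA j' hj' hjl (hedge _ _ hj' hk₁lt he)
  obtain ⟨φ₂, hl₂, he₂, hs₂⟩ := focus_induced Γ₂ l
  obtain ⟨i₂, hi₂, hφ₂⟩ := hs₂ _ hk₂lt ⟨a, hk₂lab⟩
  refine ⟨i₂, hi₂, ?_, ?_⟩
  · have := (hl₂ i₂ hi₂).2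
    rw [hφ₂, hk₂lab] at this
    exact this.symm
  · intro j he
    have hj : j < (interpC (focus Γ₂ l)).n :=
      ((interpC (focus Γ₂ l)).edge_lt _ _ he).1
    have he' := (he₂ j i₂ hj hi₂).1 he
    rw [hφ₂] at he'
    have hjl : isl l ((interpC Γ₂).label (φ₂ j)) := by
      rw [(hl₂ j hj).2]
      exact focus_label_isl hrt₂ hj
    exact claimB _ (hl₂ j hj).1 hjl he'

/-! ### Ordered partial monoid helpers -/

variable {P : OPM α}

theorem OPM.mul3 (P : OPM α) {a b c s r : α} (h1 : P.mul b c = some s)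
    (h2 : P.mul a s = some r) :
    ∃ w, P.mul a b = some w ∧ P.mul w c = some r := by
  have h := P.mul_assoc a b c
  rw [h1] at h
  simp only [Option.bind_some] at h
  rw [h2] at h
  exact Option.bind_eq_some_iff.1 h

theorem OPM.mul3' (P : OPM α) {a b c w r : α} (h1 : P.mul a b = some w)
    (h2 : P.mul w c = some r) :
    ∃ y, P.mul b c = some y ∧ P.mul a y = some r := by
  have h := P.mul_assoc a b c
  rw [h1] at h
  simp only [Option.bind_some] at h
  rw [h2] at h
  exact Option.bind_eq_some_iff.1 h.symm

/-! ### Unique topological orders -/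

theorem istoporder_one {B : Type} {G : Graph B} (hto : G.TopOrdered) :
    G.IsTopOrder 1 := by
  intro i j h
  exact hto _ _ h

theorem traceable_eq_one {B : Type} {G : Graph B} (ht : G.Traceable)
    (hto : G.TopOrdered) {f : Equiv.Perm (Fin G.n)} (hf : G.IsTopOrder f) :
    f = 1 := by
  obtain ⟨w, hw, hu⟩ := ht
  exact (hu f hf).trans (hu 1 (istoporder_one hto)).symm

/-- In a traceable graph with forward edges, a vertex with no incoming edge
is the first one. -/
theorem minvertex_eq_zero {B : Type} {G : Graph B} (ht : G.Traceable)
    (hto : G.TopOrdered) {i : ℕ} (hi : i < G.n) (hmin : ∀ j, ¬ G.edge j i) :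
    i = 0 := by
  by_contra h0
  have hipos : 0 < i := Nat.pos_of_ne_zero h0
  -- construct an alternative topological order placing vertex `i` first
  let e : Equiv.Perm (Fin G.n) :=
    { toFun := fun k => if k.val = 0 then ⟨i, hi⟩
        else if k.val ≤ i then ⟨k.val - 1, by omega⟩ else k
      invFun := fun j => if j.val = i then ⟨0, by omega⟩
        else if h : j.val < i then ⟨j.val + 1, by omega⟩ else j
      left_inv := by
        intro k
        apply Fin.ext
        dsimp only
        simp only [apply_dite Fin.val, apply_ite Fin.val]
        split_ifs <;> first | omega | exact False.elim (by assumption)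
      right_inv := by
        intro j
        apply Fin.ext
        dsimp only
        simp only [apply_dite Fin.val, apply_ite Fin.val]
        split_ifs <;> first | omega | exact False.elim (by assumption) }
  have he : G.IsTopOrder e := by
    intro x y hxy
    have hxylt := hto _ _ hxy
    have hyne : y.val ≠ i := by
      intro h
      exact hmin x.val (by rwa [h] at hxy)
    show e.symm x < e.symm y
    have hsx : e.symm x = if x.val = i then ⟨0, by omega⟩
        else if h : x.val < i then ⟨x.val + 1, by omega⟩ else x := rfl
    have hsy : e.symm y = if y.val = i then ⟨0, by omega⟩
        else if h : y.val < i then ⟨y.val + 1, by omega⟩ else y := rfl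
    rw [hsx, hsy, Fin.lt_def]
    simp only [apply_dite Fin.val, apply_ite Fin.val]
    split_ifs <;> first | omega | exact False.elim (by assumption)
  have he1 : e = 1 := traceable_eq_one ht hto he
  have h1 : e ⟨0, by omega⟩ = ⟨0, by omega⟩ := by rw [he1]; rfl
  have h2 : e ⟨0, by omega⟩ = ⟨i, hi⟩ := by
    show (if (0:ℕ) = 0 then (⟨i, hi⟩ : Fin G.n)
      else if (0:ℕ) ≤ i then ⟨0 - 1, by omega⟩ else ⟨0, by omega⟩) = ⟨i, hi⟩
    rw [if_pos rfl]
  rw [h2] at h1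
  exact h0 (congrArg Fin.val h1)

/-! ### listProd helpers -/

theorem listProd_ofFn_head (P : OPM α) {nn : ℕ} (hnn : 0 < nn)
    (g : Fin nn → α) {u : α} (h : listProd P (List.ofFn g) = some u) :
    ∃ v, P.mul (g ⟨0, hnn⟩) v = some u := by
  obtain ⟨k, rfl⟩ : ∃ k, nn = k + 1 := ⟨nn - 1, by omega⟩
  rw [List.ofFn_succ] at h
  simp only [listProd] at h
  obtain ⟨v, hv, hm⟩ := Option.bind_eq_some_iff.1 h
  exact ⟨v, hm⟩

theorem listProd_ofFn_singleton (P : OPM α) {nn : ℕ} (hnn : nn = 1)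
    (g : Fin nn → α) {u : α} (h : listProd P (List.ofFn g) = some u) :
    u = g ⟨0, by omega⟩ := by
  subst hnn
  rw [List.ofFn_succ, List.ofFn_zero] at h
  simp only [listProd, Option.bind_some, P.mul_eps] at h
  exact (Option.some_inj.1 h).symm

/-! ### Invariants extracted from heap typing -/

/-- Count/closing invariant for every location binding. -/
def DHinv (P : OPM α) (Γ : Ctx α) (H : Heap α) : Prop :=
  ∀ l a, Binding.loc l a ∈ GCtx.toList Γ →
    ∃ n m₀ m', H.find l = some (n, m₀, m') ∧ (n = 0 → P.mulLe m' a m₀)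

/-- `op` can fire on `l` whose first usage is `a`. -/
def OpOK (P : OPM α) (H : Heap α) (l : ℕ) (a : α) : Prop :=
  ∃ n m₀ m' s, H.find l = some (n, m₀, m') ∧ P.mul m' a = some s ∧
    ∃ v, P.mulLe s v m₀

theorem heapty_find {Γ : Ctx α} {H : Heap α} {P : OPM α} (hH : HeapTy P Γ H)
    {l : ℕ} {a : α} (hmem : Binding.loc l a ∈ GCtx.toList Γ) :
    ∃ t, H.find l = some t := by
  have hld : l ∈ ldom Γ := ⟨a, hmem⟩
  have hdom : l ∈ Heap.dom H := hH.2.1 ▸ hld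
  exact Option.ne_none_iff_exists'.1 hdom

theorem heapty_opok {Γ : Ctx α} {H : Heap α} (hH : HeapTy P Γ H)
    {l : ℕ} {a : α} (h : MinLoc Γ l a) : OpOK P H l a := by
  obtain ⟨i, hi, hlab, hmin⟩ := h
  have hmem : Binding.loc l a ∈ GCtx.toList Γ :=
    mem_of_mem_focus (hlab ▸ vertex_mem_toList hi)
  obtain ⟨⟨n, m₀, m'⟩, hfind⟩ := heapty_find hH hmem
  obtain ⟨hn1, u, r, ⟨f, hf, hprod⟩, hmul, hle⟩ := hH.2.2 l n m₀ m' hfind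
  have htrace := hH.1 l
  have hto := topOrdered_interp (focus Γ l)
  have hf1 : f = 1 := traceable_eq_one htrace hto hf
  have hi0 : i = 0 := minvertex_eq_zero htrace hto hi hmin
  subst hf1
  subst hi0
  obtain ⟨v, hv⟩ := listProd_ofFn_head P
    (show 0 < (interpC (focus Γ l)).n by omega) _ hprod
  have hg : bUsage P ((interpC (focus Γ l)).label
      (((1 : Equiv.Perm (Fin (interpC (focus Γ l)).n))
        ⟨0, by omega⟩ : Fin (interpC (focus Γ l)).n)).val) = a := by
    have h1 : ((1 : Equiv.Perm (Fin (interpC (focus Γ l)).n))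
        (⟨0, by omega⟩ : Fin (interpC (focus Γ l)).n)).val = 0 := rfl
    rw [h1, hlab]
    rfl
  rw [hg] at hv
  obtain ⟨w, hw, hwv⟩ := P.mul3 hv hmul
  exact ⟨n, m₀, m', w, hfind, hw, v, r, hwv, hle⟩

theorem heapty_dh {Γ : Ctx α} {H : Heap α} (hH : HeapTy P Γ H)
    (hrt : isRuntime Γ) : DHinv P Γ H := by
  intro l a hmem
  obtain ⟨⟨n, m₀, m'⟩, hfind⟩ := heapty_find hH hmem
  refine ⟨n, m₀, m', hfind, ?_⟩
  intro hn0
  subst hn0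
  obtain ⟨hn1, u, r, ⟨f, hf, hprod⟩, hmul, hle⟩ := hH.2.2 l 0 m₀ m' hfind
  have hlab : (interpC (focus Γ l)).label 0 = Binding.loc l a := by
    obtain ⟨i, hilt, hil⟩ := mem_toList_vertex (mem_focus_of_mem hmem) rfl
    have : i = 0 := by omega
    rwa [this] at hil
  have hu : u = bUsage P ((interpC (focus Γ l)).label
      ((f ⟨0, by omega⟩ : Fin (interpC (focus Γ l)).n)).val) :=
    listProd_ofFn_singleton P (by omega) _ hprod
  have hval : ((f ⟨0, by omega⟩ : Fin (interpC (focus Γ l)).n)).val = 0 := by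
    have := (f ⟨0, by omega⟩).isLt
    omega
  rw [hval, hlab] at hu
  have hu' : u = a := hu
  rw [hu'] at hmul
  exact ⟨r, hmul, hle⟩

/-! ### Context shape transfer along subcontexts -/

theorem toList_nil_transfer {Γ₂ Γ₁ : Ctx α} (hsub : SubC Γ₂ Γ₁)
    (hrt₂ : isRuntime Γ₂) (h : GCtx.toList Γ₁ = []) :
    GCtx.toList Γ₂ = [] := by
  have hrt₁ := runtime_back hsub hrt₂
  have hn₁ : (interpC Γ₁).n = 0 := by
    rw [← length_toList_runtime hrt₁, h]; rfl
  have hn₂ : (interpC Γ₂).n = 0 := (subc_hom hsub).1.trans hn₁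
  have hlen : (GCtx.toList Γ₂).length = 0 := by
    rw [length_toList_runtime hrt₂, hn₂]
  exact List.eq_nil_of_length_eq_zero hlen

theorem toList_singleton_transfer {Γ₂ Γ₁ : Ctx α} (hsub : SubC Γ₂ Γ₁)
    (hrt₂ : isRuntime Γ₂) {b : Binding α}
    (h : GCtx.toList Γ₁ = [b]) : GCtx.toList Γ₂ = [b] := by
  have hrt₁ := runtime_back hsub hrt₂
  have hn₁ : (interpC Γ₁).n = 1 := by
    rw [← length_toList_runtime hrt₁, h]; rfl
  have hn₂ : (interpC Γ₂).n = 1 := (subc_hom hsub).1.trans hn₁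
  have hlen : (GCtx.toList Γ₂).length = 1 := by
    rw [length_toList_runtime hrt₂, hn₂]
  have hlab₁ : (interpC Γ₁).label 0 = b := by
    have := vertex_mem_toList (Γ := Γ₁) (i := 0) (by omega)
    rw [h] at this
    simpa using this
  have hmem : ∀ b' ∈ GCtx.toList Γ₂, b' = b := by
    intro b' hb'
    obtain ⟨l', m', heq⟩ := hrt₂ _ hb'
    obtain ⟨i, hi, hl⟩ := mem_toList_vertex hb' (by rw [heq]; rfl)
    obtain ⟨hn, hfun, hlt, hsurj, hlab, hedge⟩ := subc_hom hsub
    obtain ⟨j, hj, hji⟩ := hsurj i (by omega)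
    have hlj := hlab j hj
    rw [hji, hl] at hlj
    have hj0 : j = 0 := by omega
    rw [hj0, hlab₁] at hlj
    exact hlj
  obtain ⟨x, hx⟩ := List.length_eq_one_iff.1 hlen
  rw [hx]
  have : x = b := hmem x (by rw [hx]; simp)
  rw [this]

/-! ### Canonical forms -/

theorem unr_val {Γ : Ctx α} {V : Expr α} {T : Ty α} {e : Bool}
    (hty : Typing P Γ V T e) :
    IsValue V → isRuntime Γ → T.unrB = true → GCtx.toList Γ = [] := by
  induction hty with
  | unit => intro _ _ _; rfl
  | new m => intro _ _ _; rfl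
  | op m₀ m₁ m₂ h => intro _ _ _; rfl
  | split m₀ m₁ m₂ h => intro _ _ _; rfl
  | drop m h => intro _ _ _; rfl
  | var x T =>
      intro _ hrt _
      obtain ⟨l, m, h⟩ := hrt (Binding.var x T) (by simp [GCtx.toList])
      cases h
  | loc l m => intro _ _ hunr; simp [Ty.unrB] at hunr
  | abs Γ x S T M e hx hu hbody ih =>
      intro _ hrt _
      rw [List.eq_nil_iff_forall_not_mem]
      intro b hb
      obtain ⟨l, m, rfl⟩ := hrt b hb
      have := hu _ hb
      simp [Binding.unrB] at this
  | uabs => intro _ _ hunr; simp [Ty.unrB] at hunr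
  | rabs => intro _ _ hunr; simp [Ty.unrB] at hunr
  | labs => intro _ _ hunr; simp [Ty.unrB] at hunr
  | app => intro hv; nomatch hv
  | uapp => intro hv; nomatch hv
  | rapp => intro hv; nomatch hv
  | lapp => intro hv; nomatch hv
  | upair Γ₁ Γ₂ M N S T e₁ e₂ h₁ h₂ ih₁ ih₂ =>
      intro hv hrt hunr
      cases hv with
      | upair _ _ hv₁ hv₂ =>
        simp only [Ty.unrB, Bool.and_eq_true] at hunr
        have hr₁ : isRuntime Γ₁ := fun b hb => hrt b (List.mem_append.2 (Or.inl hb))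
        have hr₂ : isRuntime Γ₂ := fun b hb => hrt b (List.mem_append.2 (Or.inr hb))
        show GCtx.toList Γ₁ ++ GCtx.toList Γ₂ = []
        rw [ih₁ hv₁ hr₁ hunr.1, ih₂ hv₂ hr₂ hunr.2]
        rfl
  | opair Γ₁ Γ₂ M N S T e₁ e₂ hOrd h₁ h₂ ih₁ ih₂ =>
      intro hv hrt hunr
      cases hv with
      | opair _ _ hv₁ hv₂ =>
        simp only [Ty.unrB, Bool.and_eq_true] at hunr
        have hr₁ : isRuntime Γ₁ := fun b hb => hrt b (List.mem_append.2 (Or.inl hb))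
        have hr₂ : isRuntime Γ₂ := fun b hb => hrt b (List.mem_append.2 (Or.inr hb))
        show GCtx.toList Γ₁ ++ GCtx.toList Γ₂ = []
        rw [ih₁ hv₁ hr₁ hunr.1, ih₂ hv₂ hr₂ hunr.2]
        rfl
  | ulet => intro hv; nomatch hv
  | olet => intro hv; nomatch hv
  | weaken Γ₁ Γ₂ M T e₁ e₂ h hsub hle ih =>
      intro hv hrt hunr
      exact toList_nil_transfer hsub hrt (ih hv (runtime_back hsub hrt) hunr)

theorem canon_unit {Γ : Ctx α} {V : Expr α} {T : Ty α} {e : Bool}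
    (hty : Typing P Γ V T e) :
    IsValue V → T = Ty.unit → V = Expr.const Const.unit := by
  induction hty with
  | unit => intro _ _; rfl
  | new => intro _ heq; simp at heq
  | op => intro _ heq; simp at heq
  | split => intro _ heq; simp at heq
  | drop => intro _ heq; simp at heq
  | var => intro hv; nomatch hv
  | loc => intro _ heq; simp at heq
  | abs => intro _ heq; simp at heq
  | uabs => intro _ heq; simp at heq
  | rabs => intro _ heq; simp at heq
  | labs => intro _ heq; simp at heq
  | app => intro hv; nomatch hv
  | uapp => intro hv; nomatch hv
  | rapp => intro hv; nomatch hv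
  | lapp => intro hv; nomatch hv
  | upair => intro _ heq; simp at heq
  | opair => intro _ heq; simp at heq
  | ulet => intro hv; nomatch hv
  | olet => intro hv; nomatch hv
  | weaken Γ₁ Γ₂ M T e₁ e₂ h hsub hle ih => exact ih

theorem canon_arrow {Γ : Ctx α} {V : Expr α} {T : Ty α} {e : Bool}
    (hty : Typing P Γ V T e) :
    IsValue V → ∀ S e' T', T = Ty.arrow S e' T' →
    (∃ x b, V = Expr.abs x b) ∨
    (∃ m, V = Expr.const (Const.new m) ∧ S = Ty.unit ∧ T' = Ty.res m) ∨
    (∃ m₀ m₁ m₂, V = Expr.const (Const.op m₁) ∧ S = Ty.res m₀ ∧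
      T' = Ty.res m₂ ∧ P.mulLe m₁ m₂ m₀ ∧ e' = true) ∨
    (∃ m₀ m₁ m₂, V = Expr.const (Const.split m₁ m₂) ∧ S = Ty.res m₀ ∧
      T' = Ty.oprod (Ty.res m₁) (Ty.res m₂) ∧ P.mulLe m₁ m₂ m₀) ∨
    (∃ m, V = Expr.const Const.drop ∧ S = Ty.res m ∧ T' = Ty.unit ∧
      P.le P.eps m) := by
  induction hty with
  | unit => intro _ S e' T' heq; simp at heq
  | new m =>
      intro _ S e' T' heq
      cases heq
      exact Or.inr (Or.inl ⟨m, rfl, rfl, rfl⟩)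
  | op m₀ m₁ m₂ h =>
      intro _ S e' T' heq
      cases heq
      exact Or.inr (Or.inr (Or.inl ⟨m₀, m₁, m₂, rfl, rfl, rfl, h, rfl⟩))
  | split m₀ m₁ m₂ h =>
      intro _ S e' T' heq
      cases heq
      exact Or.inr (Or.inr (Or.inr (Or.inl ⟨m₀, m₁, m₂, rfl, rfl, rfl, h⟩)))
  | drop m h =>
      intro _ S e' T' heq
      cases heq
      exact Or.inr (Or.inr (Or.inr (Or.inr ⟨m, rfl, rfl, rfl, h⟩)))
  | var => intro hv; nomatch hv
  | loc => intro _ S e' T' heq; simp at heq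
  | abs Γ x S₀ T₀ M e₀ hx hu hbody ih =>
      intro _ S e' T' heq
      exact Or.inl ⟨x, M, rfl⟩
  | uabs => intro _ S e' T' heq; simp at heq
  | rabs => intro _ S e' T' heq; simp at heq
  | labs => intro _ S e' T' heq; simp at heq
  | app => intro hv; nomatch hv
  | uapp => intro hv; nomatch hv
  | rapp => intro hv; nomatch hv
  | lapp => intro hv; nomatch hv
  | upair => intro _ S e' T' heq; simp at heq
  | opair => intro _ S e' T' heq; simp at heq
  | ulet => intro hv; nomatch hv
  | olet => intro hv; nomatch hv
  | weaken Γ₁ Γ₂ M T e₁ e₂ h hsub hle ih => exact ih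

theorem canon_uarrow {Γ : Ctx α} {V : Expr α} {T : Ty α} {e : Bool}
    (hty : Typing P Γ V T e) :
    IsValue V → ∀ S e' T', T = Ty.uarrow S e' T' →
    ∃ x b, V = Expr.uabs x b := by
  induction hty with
  | unit => intro _ S e' T' heq; simp at heq
  | new => intro _ S e' T' heq; simp at heq
  | op => intro _ S e' T' heq; simp at heq
  | split => intro _ S e' T' heq; simp at heq
  | drop => intro _ S e' T' heq; simp at heq
  | var => intro hv; nomatch hv
  | loc => intro _ S e' T' heq; simp at heq
  | abs => intro _ S e' T' heq; simp at heq
  | uabs Γ x S₀ T₀ M e₀ hx hbody ih => intro _ S e' T' heq; exact ⟨x, M, rfl⟩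
  | rabs => intro _ S e' T' heq; simp at heq
  | labs => intro _ S e' T' heq; simp at heq
  | app => intro hv; nomatch hv
  | uapp => intro hv; nomatch hv
  | rapp => intro hv; nomatch hv
  | lapp => intro hv; nomatch hv
  | upair => intro _ S e' T' heq; simp at heq
  | opair => intro _ S e' T' heq; simp at heq
  | ulet => intro hv; nomatch hv
  | olet => intro hv; nomatch hv
  | weaken Γ₁ Γ₂ M T e₁ e₂ h hsub hle ih => exact ih

theorem canon_rarrow {Γ : Ctx α} {V : Expr α} {T : Ty α} {e : Bool}
    (hty : Typing P Γ V T e) :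
    IsValue V → ∀ S e' T', T = Ty.rarrow S e' T' →
    ∃ x b, V = Expr.rabs x b := by
  induction hty with
  | unit => intro _ S e' T' heq; simp at heq
  | new => intro _ S e' T' heq; simp at heq
  | op => intro _ S e' T' heq; simp at heq
  | split => intro _ S e' T' heq; simp at heq
  | drop => intro _ S e' T' heq; simp at heq
  | var => intro hv; nomatch hv
  | loc => intro _ S e' T' heq; simp at heq
  | abs => intro _ S e' T' heq; simp at heq
  | uabs => intro _ S e' T' heq; simp at heq
  | rabs Γ x S₀ T₀ M e₀ hx hbody ih => intro _ S e' T' heq; exact ⟨x, M, rfl⟩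
  | labs => intro _ S e' T' heq; simp at heq
  | app => intro hv; nomatch hv
  | uapp => intro hv; nomatch hv
  | rapp => intro hv; nomatch hv
  | lapp => intro hv; nomatch hv
  | upair => intro _ S e' T' heq; simp at heq
  | opair => intro _ S e' T' heq; simp at heq
  | ulet => intro hv; nomatch hv
  | olet => intro hv; nomatch hv
  | weaken Γ₁ Γ₂ M T e₁ e₂ h hsub hle ih => exact ih

theorem canon_larrow {Γ : Ctx α} {V : Expr α} {T : Ty α} {e : Bool}
    (hty : Typing P Γ V T e) :
    IsValue V → ∀ S e' T', T = Ty.larrow S e' T' →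
    ∃ x b, V = Expr.labs x b := by
  induction hty with
  | unit => intro _ S e' T' heq; simp at heq
  | new => intro _ S e' T' heq; simp at heq
  | op => intro _ S e' T' heq; simp at heq
  | split => intro _ S e' T' heq; simp at heq
  | drop => intro _ S e' T' heq; simp at heq
  | var => intro hv; nomatch hv
  | loc => intro _ S e' T' heq; simp at heq
  | abs => intro _ S e' T' heq; simp at heq
  | uabs => intro _ S e' T' heq; simp at heq
  | rabs => intro _ S e' T' heq; simp at heq
  | labs Γ x S₀ T₀ M e₀ hx hbody ih => intro _ S e' T' heq; exact ⟨x, M, rfl⟩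
  | app => intro hv; nomatch hv
  | uapp => intro hv; nomatch hv
  | rapp => intro hv; nomatch hv
  | lapp => intro hv; nomatch hv
  | upair => intro _ S e' T' heq; simp at heq
  | opair => intro _ S e' T' heq; simp at heq
  | ulet => intro hv; nomatch hv
  | olet => intro hv; nomatch hv
  | weaken Γ₁ Γ₂ M T e₁ e₂ h hsub hle ih => exact ih

theorem canon_uprod {Γ : Ctx α} {V : Expr α} {T : Ty α} {e : Bool}
    (hty : Typing P Γ V T e) :
    IsValue V → ∀ S₁ S₂, T = Ty.uprod S₁ S₂ →
    ∃ V₁ V₂, V = Expr.upair V₁ V₂ ∧ IsValue V₁ ∧ IsValue V₂ := by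
  induction hty with
  | unit => intro _ S₁ S₂ heq; simp at heq
  | new => intro _ S₁ S₂ heq; simp at heq
  | op => intro _ S₁ S₂ heq; simp at heq
  | split => intro _ S₁ S₂ heq; simp at heq
  | drop => intro _ S₁ S₂ heq; simp at heq
  | var => intro hv; nomatch hv
  | loc => intro _ S₁ S₂ heq; simp at heq
  | abs => intro _ S₁ S₂ heq; simp at heq
  | uabs => intro _ S₁ S₂ heq; simp at heq
  | rabs => intro _ S₁ S₂ heq; simp at heq
  | labs => intro _ S₁ S₂ heq; simp at heq
  | app => intro hv; nomatch hv
  | uapp => intro hv; nomatch hv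
  | rapp => intro hv; nomatch hv
  | lapp => intro hv; nomatch hv
  | upair Γ₁ Γ₂ M N S T e₁ e₂ h₁ h₂ ih₁ ih₂ =>
      intro hv S₁ S₂ heq
      cases hv with
      | upair _ _ hv₁ hv₂ => exact ⟨M, N, rfl, hv₁, hv₂⟩
  | opair => intro _ S₁ S₂ heq; simp at heq
  | ulet => intro hv; nomatch hv
  | olet => intro hv; nomatch hv
  | weaken Γ₁ Γ₂ M T e₁ e₂ h hsub hle ih => exact ih

theorem canon_oprod {Γ : Ctx α} {V : Expr α} {T : Ty α} {e : Bool}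
    (hty : Typing P Γ V T e) :
    IsValue V → ∀ S₁ S₂, T = Ty.oprod S₁ S₂ →
    ∃ V₁ V₂, V = Expr.opair V₁ V₂ ∧ IsValue V₁ ∧ IsValue V₂ := by
  induction hty with
  | unit => intro _ S₁ S₂ heq; simp at heq
  | new => intro _ S₁ S₂ heq; simp at heq
  | op => intro _ S₁ S₂ heq; simp at heq
  | split => intro _ S₁ S₂ heq; simp at heq
  | drop => intro _ S₁ S₂ heq; simp at heq
  | var => intro hv; nomatch hv
  | loc => intro _ S₁ S₂ heq; simp at heq
  | abs => intro _ S₁ S₂ heq; simp at heq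
  | uabs => intro _ S₁ S₂ heq; simp at heq
  | rabs => intro _ S₁ S₂ heq; simp at heq
  | labs => intro _ S₁ S₂ heq; simp at heq
  | app => intro hv; nomatch hv
  | uapp => intro hv; nomatch hv
  | rapp => intro hv; nomatch hv
  | lapp => intro hv; nomatch hv
  | upair => intro _ S₁ S₂ heq; simp at heq
  | opair Γ₁ Γ₂ M N S T e₁ e₂ hOrd h₁ h₂ ih₁ ih₂ =>
      intro hv S₁ S₂ heq
      cases hv with
      | opair _ _ hv₁ hv₂ => exact ⟨M, N, rfl, hv₁, hv₂⟩
  | ulet => intro hv; nomatch hv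
  | olet => intro hv; nomatch hv
  | weaken Γ₁ Γ₂ M T e₁ e₂ h hsub hle ih => exact ih

theorem canon_res {Γ : Ctx α} {V : Expr α} {T : Ty α} {e : Bool}
    (hty : Typing P Γ V T e) :
    IsValue V → isRuntime Γ → ∀ m₀, T = Ty.res m₀ →
    ∃ l, V = Expr.loc l ∧ GCtx.toList Γ = [Binding.loc l m₀] := by
  induction hty with
  | unit => intro _ _ m₀ heq; simp at heq
  | new => intro _ _ m₀ heq; simp at heq
  | op => intro _ _ m₀ heq; simp at heq
  | split => intro _ _ m₀ heq; simp at heq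
  | drop => intro _ _ m₀ heq; simp at heq
  | var => intro hv; nomatch hv
  | loc l m =>
      intro _ _ m₀ heq
      cases heq
      exact ⟨l, rfl, rfl⟩
  | abs => intro _ _ m₀ heq; simp at heq
  | uabs => intro _ _ m₀ heq; simp at heq
  | rabs => intro _ _ m₀ heq; simp at heq
  | labs => intro _ _ m₀ heq; simp at heq
  | app => intro hv; nomatch hv
  | uapp => intro hv; nomatch hv
  | rapp => intro hv; nomatch hv
  | lapp => intro hv; nomatch hv
  | upair => intro _ _ m₀ heq; simp at heq
  | opair => intro _ _ m₀ heq; simp at heq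
  | ulet => intro hv; nomatch hv
  | olet => intro hv; nomatch hv
  | weaken Γ₁ Γ₂ M T e₁ e₂ h hsub hle ih =>
      intro hv hrt m₀ heq
      obtain ⟨l, hV, hlist⟩ := ih hv (runtime_back hsub hrt) m₀ heq
      exact ⟨l, hV, toList_singleton_transfer hsub hrt hlist⟩

/-! ### Evaluation context composition -/

def ECtx.comp : ECtx α → ECtx α → ECtx α
  | .hole, E => E
  | .appL E₁ N, E => .appL (E₁.comp E) N
  | .appR V hV E₁, E => .appR V hV (E₁.comp E)
  | .uappL E₁ N, E => .uappL (E₁.comp E) N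
  | .uappR V hV E₁, E => .uappR V hV (E₁.comp E)
  | .rappL E₁ N, E => .rappL (E₁.comp E) N
  | .rappR V hV E₁, E => .rappR V hV (E₁.comp E)
  | .lappL E₁ V hV, E => .lappL (E₁.comp E) V hV
  | .lappR N E₁, E => .lappR N (E₁.comp E)
  | .upairL E₁ N, E => .upairL (E₁.comp E) N
  | .upairR V hV E₁, E => .upairR V hV (E₁.comp E)
  | .opairL E₁ N, E => .opairL (E₁.comp E) N
  | .opairR V hV E₁, E => .opairR V hV (E₁.comp E)
  | .uletE x y E₁ N, E => .uletE x y (E₁.comp E) N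
  | .oletE x y E₁ N, E => .oletE x y (E₁.comp E) N

theorem ECtx.comp_plug (E₀ E : ECtx α) (M : Expr α) :
    (E₀.comp E).plug M = E₀.plug (E.plug M) := by
  induction E₀ <;> simp [ECtx.comp, ECtx.plug, *]

theorem step_lift {P : OPM α} (E₀ : ECtx α) {M M' : Expr α} {H H' : Heap α}
    (h : Step P M H M' H') : Step P (E₀.plug M) H (E₀.plug M') H' := by
  cases h with
  | exp E M₀ M₀' H hb =>
      rw [← ECtx.comp_plug, ← ECtx.comp_plug]
      exact Step.exp _ _ _ _ hb
  | cfg E M₀ M₀' H H' hc =>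
      rw [← ECtx.comp_plug, ← ECtx.comp_plug]
      exact Step.cfg _ _ _ _ _ hc

/-- A step at the top. -/
theorem step_beta {P : OPM α} {M M' : Expr α} (H : Heap α)
    (h : BetaStep M M') : Step P M H M' H :=
  Step.exp ECtx.hole M M' H h

theorem step_cfg {P : OPM α} {M M' : Expr α} {H H' : Heap α}
    (h : CfgStep P M H M' H') : Step P M H M' H' :=
  Step.cfg ECtx.hole M M' H H' h

theorem fill_mem {G : CtxPat α} {Γ : Ctx α} {b : Binding α}
    (hb : b ∈ GCtx.toList Γ) : b ∈ GCtx.toList (GPat.fill G Γ) := by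
  induction G with
  | hole => exact hb
  | commaL G' Δ ih => exact List.mem_append.2 (Or.inl ih)
  | commaR Δ G' ih => exact List.mem_append.2 (Or.inr ih)
  | parL G' Δ ih => exact List.mem_append.2 (Or.inl ih)
  | parR Δ G' ih => exact List.mem_append.2 (Or.inr ih)

/-! ### The main induction -/

theorem progress_main {Γ : Ctx α} {M : Expr α} {T : Ty α} {e : Bool}
    {H : Heap α} (hty : Typing P Γ M T e) :
    isRuntime Γ → DHinv P Γ H →
    (e = true → ∀ l a, MinLoc Γ l a → OpOK P H l a) →
    IsValue M ∨ ∃ M' H', Step P M H M' H' := by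
  induction hty with
  | unit => intro _ _ _; exact Or.inl (IsValue.const _)
  | new m => intro _ _ _; exact Or.inl (IsValue.const _)
  | op m₀ m₁ m₂ h => intro _ _ _; exact Or.inl (IsValue.const _)
  | split m₀ m₁ m₂ h => intro _ _ _; exact Or.inl (IsValue.const _)
  | drop m h => intro _ _ _; exact Or.inl (IsValue.const _)
  | var x T =>
      intro hrt _ _
      obtain ⟨l, m, h⟩ := hrt (Binding.var x T) (by simp [GCtx.toList])
      cases h
  | loc l m => intro _ _ _; exact Or.inl (IsValue.loc _)
  | abs Γ x S T M e hx hu hbody ih => intro _ _ _; exact Or.inl (IsValue.abs _ _)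
  | uabs Γ x S T M e hx hbody ih => intro _ _ _; exact Or.inl (IsValue.uabs _ _)
  | rabs Γ x S T M e hx hbody ih => intro _ _ _; exact Or.inl (IsValue.rabs _ _)
  | labs Γ x S T M e hx hbody ih => intro _ _ _; exact Or.inl (IsValue.labs _ _)
  | app Γ₁ Γ₂ MM NN S T e e₁ e₂ hM hN ihM ihN =>
      intro hrt hdh hop
      have hrt₁ : isRuntime Γ₁ := fun b hb => hrt b (List.mem_append.2 (Or.inl hb))
      have hrt₂ : isRuntime Γ₂ := fun b hb => hrt b (List.mem_append.2 (Or.inr hb))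
      have hdh₁ : DHinv P Γ₁ H := fun l a h => hdh l a (List.mem_append.2 (Or.inl h))
      have hdh₂ : DHinv P Γ₂ H := fun l a h => hdh l a (List.mem_append.2 (Or.inr h))
      rcases ihM hrt₁ hdh₁ (fun he₁ l a hml =>
          hop (by simp [he₁]) l a (minloc_comma_left hml)) with hvM | ⟨M', H', hstep⟩
      swap
      · exact Or.inr ⟨_, H', step_lift (ECtx.appL .hole NN) hstep⟩
      have hNil : GCtx.toList Γ₁ = [] := unr_val hM hvM hrt₁ rfl
      rcases ihN hrt₂ hdh₂ (fun he₂ l a hml =>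
          hop (by simp [he₂]) l a
            (minloc_comma_right (nfocus_zero_of_nil hNil l) hml))
        with hvN | ⟨N', H', hstep⟩
      swap
      · exact Or.inr ⟨_, H', step_lift (ECtx.appR MM hvM .hole) hstep⟩
      -- both values: a redex
      rcases canon_arrow hM hvM S e T rfl with
        ⟨x, b, rfl⟩ | ⟨m, rfl, rfl, rfl⟩ | ⟨m₀, m₁, m₂, rfl, rfl, rfl, hm, he'⟩ |
        ⟨m₀, m₁, m₂, rfl, rfl, rfl, hm⟩ | ⟨m, rfl, rfl, rfl, hm⟩
      · exact Or.inr ⟨_, H, step_beta H (BetaStep.beta x b NN hvN)⟩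
      · -- new
        have hNu := canon_unit hN hvN rfl
        subst hNu
        obtain ⟨l, hl⟩ := (Set.Finite.infinite_compl H.fin).nonempty
        exact Or.inr ⟨_, _, step_cfg (CfgStep.new H l m hl)⟩
      · -- op
        obtain ⟨l, rfl, hlist⟩ := canon_res hN hvN hrt₂ m₀ rfl
        have hml : MinLoc (GCtx.comma Γ₁ Γ₂) l m₀ :=
          minloc_comma_right (nfocus_zero_of_nil hNil l)
            (minloc_single hrt₂ hlist)
        obtain ⟨n, m₀', m', s, hfind, hmuls, v, r, hsv, hrle⟩ :=
          hop (by simp [he']) l m₀ hml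
        obtain ⟨p, hp, hple⟩ := hm
        obtain ⟨c, hc, hcs⟩ := P.mul_mono m' m' p m₀ s (P.le_refl m') hple hmuls
        obtain ⟨d, hd, hdr⟩ := P.mul_mono c s v v r hcs (P.le_refl v) hsv
        have hdm₀ : P.le d m₀' := P.le_trans _ _ _ hdr hrle
        obtain ⟨w, hw, hwc⟩ := P.mul3 hp hc
        obtain ⟨y, hy, hwy⟩ := P.mul3' hwc hd
        exact Or.inr ⟨_, _, step_cfg
          (CfgStep.op H l n m₀' m₁ m' w hfind hw ⟨y, d, hwy, hdm₀⟩)⟩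
      · -- split
        obtain ⟨l, rfl, hlist⟩ := canon_res hN hvN hrt₂ m₀ rfl
        obtain ⟨n, m₀', m', hfind, _⟩ := hdh l m₀
          (List.mem_append.2 (Or.inr (by rw [hlist]; simp)))
        exact Or.inr ⟨_, _, step_cfg (CfgStep.sp H l n m₀' m' m₁ m₂ hfind)⟩
      · -- drop
        obtain ⟨l, rfl, hlist⟩ := canon_res hN hvN hrt₂ m rfl
        obtain ⟨n, m₀', m', hfind, h0⟩ := hdh l m
          (List.mem_append.2 (Or.inr (by rw [hlist]; simp)))
        match n, hfind, h0 with
        | 0, hfind, h0 =>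
          obtain ⟨r, hr, hrle⟩ := h0 rfl
          obtain ⟨c, hc, hcr⟩ := P.mul_mono m' m' P.eps m r (P.le_refl m') hm hr
          rw [P.mul_eps] at hc
          cases hc
          exact Or.inr ⟨_, _, step_cfg (CfgStep.cl2 H l m₀' m' hfind
            (P.le_trans _ _ _ hcr hrle))⟩
        | (k+1), hfind, _ =>
          exact Or.inr ⟨_, _, step_cfg (CfgStep.cl1 H l k m₀' m' hfind)⟩
  | uapp Γ₁ Γ₂ MM NN S T e e₁ e₂ hM hN ihM ihN =>
      intro hrt hdh hop
      have hrt₁ : isRuntime Γ₁ := fun b hb => hrt b (List.mem_append.2 (Or.inl hb))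
      have hrt₂ : isRuntime Γ₂ := fun b hb => hrt b (List.mem_append.2 (Or.inr hb))
      have hdh₁ : DHinv P Γ₁ H := fun l a h => hdh l a (List.mem_append.2 (Or.inl h))
      have hdh₂ : DHinv P Γ₂ H := fun l a h => hdh l a (List.mem_append.2 (Or.inr h))
      rcases ihM hrt₁ hdh₁ (fun he₁ l a hml =>
          hop (by simp [he₁]) l a (minloc_par_left hml)) with hvM | ⟨M', H', hstep⟩
      swap
      · exact Or.inr ⟨_, H', step_lift (ECtx.uappL .hole NN) hstep⟩
      rcases ihN hrt₂ hdh₂ (fun he₂ l a hml =>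
          hop (by simp [he₂]) l a (minloc_par_right hml)) with hvN | ⟨N', H', hstep⟩
      swap
      · exact Or.inr ⟨_, H', step_lift (ECtx.uappR MM hvM .hole) hstep⟩
      obtain ⟨x, b, rfl⟩ := canon_uarrow hM hvM S e T rfl
      exact Or.inr ⟨_, H, step_beta H (BetaStep.ubeta x b NN hvN)⟩
  | rapp Γ₁ Γ₂ MM NN S T e e₁ hM hN ihM ihN =>
      intro hrt hdh hop
      have hrt₁ : isRuntime Γ₁ := fun b hb => hrt b (List.mem_append.2 (Or.inl hb))
      have hrt₂ : isRuntime Γ₂ := fun b hb => hrt b (List.mem_append.2 (Or.inr hb))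
      have hdh₁ : DHinv P Γ₁ H := fun l a h => hdh l a (List.mem_append.2 (Or.inl h))
      have hdh₂ : DHinv P Γ₂ H := fun l a h => hdh l a (List.mem_append.2 (Or.inr h))
      rcases ihM hrt₁ hdh₁ (fun he₁ l a hml =>
          hop (by simp [he₁]) l a (minloc_comma_left hml)) with hvM | ⟨M', H', hstep⟩
      swap
      · exact Or.inr ⟨_, H', step_lift (ECtx.rappL .hole NN) hstep⟩
      rcases ihN hrt₂ hdh₂ (fun h => nomatch h) with hvN | ⟨N', H', hstep⟩
      swap
      · exact Or.inr ⟨_, H', step_lift (ECtx.rappR MM hvM .hole) hstep⟩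
      obtain ⟨x, b, rfl⟩ := canon_rarrow hM hvM S e T rfl
      exact Or.inr ⟨_, H, step_beta H (BetaStep.rbeta x b NN hvN)⟩
  | lapp Γ₁ Γ₂ MM NN S T e e₂ hM hN ihM ihN =>
      intro hrt hdh hop
      have hrt₁ : isRuntime Γ₁ := fun b hb => hrt b (List.mem_append.2 (Or.inl hb))
      have hrt₂ : isRuntime Γ₂ := fun b hb => hrt b (List.mem_append.2 (Or.inr hb))
      have hdh₁ : DHinv P Γ₁ H := fun l a h => hdh l a (List.mem_append.2 (Or.inl h))
      have hdh₂ : DHinv P Γ₂ H := fun l a h => hdh l a (List.mem_append.2 (Or.inr h))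
      rcases ihN hrt₁ hdh₁ (fun he₂ l a hml =>
          hop (by simp [he₂]) l a (minloc_comma_left hml)) with hvN | ⟨N', H', hstep⟩
      swap
      · exact Or.inr ⟨_, H', step_lift (ECtx.lappR MM .hole) hstep⟩
      rcases ihM hrt₂ hdh₂ (fun h => nomatch h) with hvM | ⟨M', H', hstep⟩
      swap
      · exact Or.inr ⟨_, H', step_lift (ECtx.lappL .hole NN hvN) hstep⟩
      obtain ⟨x, b, rfl⟩ := canon_larrow hM hvM S e T rfl
      exact Or.inr ⟨_, H, step_beta H (BetaStep.lbeta x b NN hvN)⟩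
  | upair Γ₁ Γ₂ MM NN S T e₁ e₂ hM hN ihM ihN =>
      intro hrt hdh hop
      have hrt₁ : isRuntime Γ₁ := fun b hb => hrt b (List.mem_append.2 (Or.inl hb))
      have hrt₂ : isRuntime Γ₂ := fun b hb => hrt b (List.mem_append.2 (Or.inr hb))
      have hdh₁ : DHinv P Γ₁ H := fun l a h => hdh l a (List.mem_append.2 (Or.inl h))
      have hdh₂ : DHinv P Γ₂ H := fun l a h => hdh l a (List.mem_append.2 (Or.inr h))
      rcases ihM hrt₁ hdh₁ (fun he₁ l a hml =>
          hop (by simp [he₁]) l a (minloc_par_left hml)) with hvM | ⟨M', H', hstep⟩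
      swap
      · exact Or.inr ⟨_, H', step_lift (ECtx.upairL .hole NN) hstep⟩
      rcases ihN hrt₂ hdh₂ (fun he₂ l a hml =>
          hop (by simp [he₂]) l a (minloc_par_right hml)) with hvN | ⟨N', H', hstep⟩
      swap
      · exact Or.inr ⟨_, H', step_lift (ECtx.upairR MM hvM .hole) hstep⟩
      exact Or.inl (IsValue.upair _ _ hvM hvN)
  | opair Γ₁ Γ₂ MM NN S T e₁ e₂ hOrd hM hN ihM ihN =>
      intro hrt hdh hop
      have hrt₁ : isRuntime Γ₁ := fun b hb => hrt b (List.mem_append.2 (Or.inl hb))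
      have hrt₂ : isRuntime Γ₂ := fun b hb => hrt b (List.mem_append.2 (Or.inr hb))
      have hdh₁ : DHinv P Γ₁ H := fun l a h => hdh l a (List.mem_append.2 (Or.inl h))
      have hdh₂ : DHinv P Γ₂ H := fun l a h => hdh l a (List.mem_append.2 (Or.inr h))
      rcases ihM hrt₁ hdh₁ (fun he₁ l a hml =>
          hop (by simp [he₁]) l a (minloc_comma_left hml)) with hvM | ⟨M', H', hstep⟩
      swap
      · exact Or.inr ⟨_, H', step_lift (ECtx.opairL .hole NN) hstep⟩
      rcases ihN hrt₂ hdh₂ (fun he₂ l a hml => by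
          have hS : S.unrB = true := by
            by_cases hb : S.unrB = false
            · have := hOrd hb
              rw [this] at he₂
              exact absurd he₂ (by simp)
            · simpa using hb
          have hNil : GCtx.toList Γ₁ = [] := unr_val hM hvM hrt₁ hS
          exact hop (by simp [he₂]) l a
            (minloc_comma_right (nfocus_zero_of_nil hNil l) hml))
        with hvN | ⟨N', H', hstep⟩
      swap
      · exact Or.inr ⟨_, H', step_lift (ECtx.opairR MM hvM .hole) hstep⟩
      exact Or.inl (IsValue.opair _ _ hvM hvN)
  | ulet G Γ x y MM NN S₁ S₂ T e hxy hx hy hM hN ihM ihN =>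
      intro hrt hdh hop
      have hrtΓ : isRuntime Γ := fun b hb => hrt b (fill_mem hb)
      have hdhΓ : DHinv P Γ H := fun l a h => hdh l a (fill_mem h)
      rcases ihM hrtΓ hdhΓ (fun h => nomatch h) with hvM | ⟨M', H', hstep⟩
      swap
      · exact Or.inr ⟨_, H', step_lift (ECtx.uletE x y .hole NN) hstep⟩
      obtain ⟨V₁, V₂, rfl, hv₁, hv₂⟩ := canon_uprod hM hvM S₁ S₂ rfl
      exact Or.inr ⟨_, H, step_beta H (BetaStep.uletv x y NN V₁ V₂ hxy hv₁ hv₂)⟩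
  | olet G Γ x y MM NN S₁ S₂ T e hxy hx hy hM hN ihM ihN =>
      intro hrt hdh hop
      have hrtΓ : isRuntime Γ := fun b hb => hrt b (fill_mem hb)
      have hdhΓ : DHinv P Γ H := fun l a h => hdh l a (fill_mem h)
      rcases ihM hrtΓ hdhΓ (fun h => nomatch h) with hvM | ⟨M', H', hstep⟩
      swap
      · exact Or.inr ⟨_, H', step_lift (ECtx.oletE x y .hole NN) hstep⟩
      obtain ⟨V₁, V₂, rfl, hv₁, hv₂⟩ := canon_oprod hM hvM S₁ S₂ rfl
      exact Or.inr ⟨_, H, step_beta H (BetaStep.oletv x y NN V₁ V₂ hxy hv₁ hv₂)⟩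
  | weaken Γ₁ Γ₂ MM TT e₁ e₂ hM hsub hle ih =>
      intro hrt hdh hop
      refine ih (runtime_back hsub hrt)
        (fun l a hb => hdh l a (subc_mem hsub hb)) ?_
      intro he₁ l a hml
      have he₂ : e₂ = true := by
        rw [he₁] at hle
        cases e₂
        · exact absurd hle (by simp)
        · rfl
      exact hop he₂ l a (minloc_subc hsub hrt hml)

end Aux

/-- **Progress.** If `C ⊢ M : T | e` and `(C , C') ⊢ ℋ` for a run-time
context `C'`, then `M` is a value or `M | ℋ` can take a step. -/
theorem progress {α : Type} (P : OPM α) (C C' : Ctx α) (M : Expr α)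
    (H : Heap α) (T : Ty α) (e : Bool)
    (hC : isRuntime C) (hC' : isRuntime C')
    (hty : Typing P C M T e)
    (hheap : HeapTy P (GCtx.comma C C') H) :
    IsValue M ∨ ∃ (M' : Expr α) (H' : Heap α), Step P M H M' H' := by
  have hrtCC : isRuntime (GCtx.comma C C') := fun b hb =>
    (List.mem_append.1 hb).elim (hC b) (hC' b)
  have hdh := heapty_dh hheap hrtCC
  exact progress_main hty hC
    (fun l a hb => hdh l a (List.mem_append.2 (Or.inl hb)))
    (fun _ l a hml => heapty_opok hheap (minloc_comma_left hml))

end LawOrder
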